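/- arXiv:1910.11808 — 5 statements merged into one kernel-verified Lean document; each statement's English description precedes it below -/
import Mathlib

section
/- Let d(n) be the number of nondecreasing Dyck words of semilength n and let r(n) be the sum, over all nondecreasing Dyck words of semilength n, of the number of returns. Then r(n)/d(n) converges, as n → ∞, to (3 + √5)/2; that is, the average degree of the root of a random Elena tree with n+1 nodes tends to (3 + √5)/2. -/
/-- Height of the prefix of length `i` of the word `w`
(`true` = U-step, `false` = D-step): number of U's minus number of D's. -/
def prefixHeight (w : List Bool) (i : ℕ) : ℤ :=
  ((w.take i).count true : ℤ) - ((w.take i).count false : ℤ)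

/-- `w` is a Dyck word: every prefix has nonnegative height and the whole word
has height 0 (equally many U's and D's). -/
def IsDyckWord (w : List Bool) : Prop :=
  (∀ i, i ≤ w.length → 0 ≤ prefixHeight w i) ∧ prefixHeight w w.length = 0

/-- A valley at (0-based) position `i`: a D-step immediately followed by a U-step. -/
def IsValley (w : List Bool) (i : ℕ) : Prop :=
  w[i]? = some false ∧ w[i + 1]? = some true

/-- A nondecreasing Dyck word: a Dyck word whose valley altitudes, read left to
right, form a nondecreasing sequence.  The altitude of a valley at position `i`
is the height of the prefix ending at that D-step, i.e. of length `i + 1`. -/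
def IsNondecDyck (w : List Bool) : Prop :=
  IsDyckWord w ∧ ∀ i j, IsValley w i → IsValley w j → i ≤ j →
    prefixHeight w (i + 1) ≤ prefixHeight w (j + 1)

/-- The set of nondecreasing Dyck words of semilength `n`. -/
def nondecDyck (n : ℕ) : Set (List Bool) :=
  {w | w.length = 2 * n ∧ IsNondecDyck w}

/-- `d n` = number of nondecreasing Dyck words of semilength `n`. -/
noncomputable def numNondecDyck (n : ℕ) : ℕ := (nondecDyck n).ncard

/-- Number of returns of `w`: indices `1 ≤ i ≤ |w|` where the prefix of length
`i` has height `0`. -/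
def numReturns (w : List Bool) : ℕ :=
  ((Finset.Icc 1 w.length).filter fun i => prefixHeight w i = 0).card

/-- `r n`: total number of returns over all nondecreasing Dyck words of
semilength `n`. -/
noncomputable def totalReturns (n : ℕ) : ℕ :=
  ∑ᶠ w ∈ nondecDyck n, numReturns w

-- stage 1: basic prefixHeight lemmas
variable {w x y : List Bool}

lemma ph_zero (w : List Bool) : prefixHeight w 0 = 0 := by simp [prefixHeight]

lemma ph_ge (w : List Bool) {i : ℕ} (h : w.length ≤ i) :
    prefixHeight w i = prefixHeight w w.length := by
  simp [prefixHeight, List.take_of_length_le h, List.take_length]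

lemma count_list (l : List Bool) :
    (l.count true : ℤ) + (l.count false : ℤ) = l.length := by
  induction l with
  | nil => simp
  | cons a t ih => cases a <;> simp [List.count_cons] <;> push_cast <;> omega

lemma ph_succ (w : List Bool) (i : ℕ) (hi : i < w.length) :
    prefixHeight w (i + 1) = prefixHeight w i + (if w[i]? = some true then 1 else -1) := by
  have ht : w.take (i+1) = w.take i ++ [w[i]] := by
    rw [List.take_succ]
    simp [List.getElem?_eq_getElem hi]
  rw [prefixHeight, prefixHeight, ht]
  rcases h : w[i] with _ | _ <;>
    simp [List.count_append, h, List.getElem?_eq_getElem hi] <;> push_cast <;> ring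

lemma ph_step_true (w : List Bool) (i : ℕ) (h : w[i]? = some true) :
    prefixHeight w (i + 1) = prefixHeight w i + 1 := by
  have hi : i < w.length := by
    by_contra hc
    rw [List.getElem?_eq_none (by omega)] at h
    exact nomatch h
  rw [ph_succ w i hi, if_pos h]

lemma ph_step_false (w : List Bool) (i : ℕ) (h : w[i]? = some false) :
    prefixHeight w (i + 1) = prefixHeight w i - 1 := by
  have hi : i < w.length := by
    by_contra hc
    rw [List.getElem?_eq_none (by omega)] at h
    exact nomatch h
  rw [ph_succ w i hi, if_neg (by simp [h]), sub_eq_add_neg]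

lemma ph_append_le (x y : List Bool) {i : ℕ} (h : i ≤ x.length) :
    prefixHeight (x ++ y) i = prefixHeight x i := by
  simp [prefixHeight, List.take_append_of_le_length h]

lemma ph_append_ge (x y : List Bool) {i : ℕ} (h : x.length ≤ i) :
    prefixHeight (x ++ y) i = prefixHeight x x.length + prefixHeight y (i - x.length) := by
  have : (x ++ y).take i = x ++ y.take (i - x.length) := by
    rw [List.take_append]
    congr 1
    exact List.take_of_length_le (by omega)
  simp only [prefixHeight, this, List.count_append, List.take_length]
  push_cast; ring

lemma ph_cons_true (w : List Bool) (i : ℕ) :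
    prefixHeight (true :: w) (i + 1) = 1 + prefixHeight w i := by
  simp [prefixHeight, List.count_cons]
  push_cast; ring
-- stage 2: pyramids
def pyr (k : ℕ) : List Bool := List.replicate k true ++ List.replicate k false

lemma pyr_length (k : ℕ) : (pyr k).length = 2 * k := by simp [pyr]; ring

lemma pyr_take_le (k i : ℕ) (h : i ≤ k) : (pyr k).take i = List.replicate i true := by
  rw [pyr, List.take_append_of_le_length (by simpa using h), List.take_replicate,
    min_eq_left h]

lemma pyr_take_ge (k i : ℕ) (h : k ≤ i) :
    (pyr k).take i = List.replicate k true ++ List.replicate (min (i - k) k) false := by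
  rw [pyr, List.take_append, List.take_of_length_le (by simpa using h),
    List.take_replicate]
  simp

lemma ph_pyr (k i : ℕ) (h : i ≤ 2 * k) :
    prefixHeight (pyr k) i = if i ≤ k then (i : ℤ) else 2 * k - i := by
  rcases le_or_gt i k with hik | hik
  · rw [if_pos hik, prefixHeight, pyr_take_le k i hik]
    simp [List.count_replicate]
  · rw [if_neg (by omega), prefixHeight, pyr_take_ge k i hik.le,
      min_eq_left (by omega)]
    simp [List.count_append, List.count_replicate]
    push_cast [show i - k + k = i by omega]
    omega

lemma ph_pyr_end (k : ℕ) : prefixHeight (pyr k) (2 * k) = 0 := by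
  rw [ph_pyr k _ le_rfl]
  rcases le_or_gt (2*k) k with h | h
  · rw [if_pos h]; omega
  · rw [if_neg (by omega)]; push_cast; ring

lemma ph_pyr_pos (k i : ℕ) (h1 : 1 ≤ i) (h2 : i < 2 * k) :
    0 < prefixHeight (pyr k) i := by
  rw [ph_pyr k i h2.le]
  rcases le_or_gt i k with h | h
  · rw [if_pos h]; exact_mod_cast h1
  · rw [if_neg (by omega)]
    have : (i : ℤ) < 2 * k := by exact_mod_cast h2
    omega

lemma pyr_getElem? (k i : ℕ) :
    (pyr k)[i]? = if i < k then some true else if i < 2 * k then some false else none := by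
  rcases lt_or_ge i k with h | h
  · rw [pyr, List.getElem?_append_left (by simpa using h)]
    simp [List.getElem?_replicate, h]
  · rcases lt_or_ge i (2 * k) with h2 | h2
    · rw [pyr, List.getElem?_append_right (by simpa using h)]
      rw [if_neg (by omega), if_pos h2]
      simp [List.getElem?_replicate]
      omega
    · rw [List.getElem?_eq_none (by rw [pyr_length]; omega), if_neg (by omega), if_neg (by omega)]

-- a list with no DU factor is T^a ++ F^b
lemma no_valley_structure : ∀ (l : List Bool),
    (∀ i, ¬ (l[i]? = some false ∧ l[i+1]? = some true)) →
    l = List.replicate (l.count true) true ++ List.replicate (l.count false) false := by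
  intro l
  induction l with
  | nil => simp
  | cons a t ih =>
    intro h
    have ht := ih (fun i hi => h (i + 1) (by simpa using hi))
    cases a with
    | true =>
      have : (true :: t).count true = t.count true + 1 := by simp
      rw [this, List.count_cons]
      simp only [if_neg (by simp : ¬ (true = false)), List.replicate_succ]
      rw [List.cons_append]
      exact congrArg (List.cons true) (by simpa using ht)
    | false =>
      have hct : t.count true = 0 := by
        by_contra hc
        have h0 : t[0]? = some true := by
          conv_lhs => rw [ht]
          rcases Nat.exists_eq_add_of_lt (Nat.pos_of_ne_zero hc) with ⟨m, hm⟩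
          rw [List.getElem?_append_left (by simpa using Nat.pos_of_ne_zero hc)]
          simp [List.getElem?_replicate, Nat.pos_of_ne_zero hc]
        exact h 0 ⟨by simp, by simpa using h0⟩
      rw [hct] at ht
      have : (false :: t).count true = 0 := by simp [hct]
      rw [this, List.replicate_zero, List.nil_append]
      have : (false :: t).count false = t.count false + 1 := by simp
      rw [this, List.replicate_succ]
      simpa using ht
-- stage 3: the two constructions
-- map1: w ↦ true :: w ++ [false]

lemma ph_map1 (w : List Bool) {i : ℕ} (h : i ≤ w.length) :
    prefixHeight (true :: (w ++ [false])) (i + 1) = 1 + prefixHeight w i := by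
  rw [ph_cons_true, ph_append_le _ _ h]

lemma ph_map1_end (w : List Bool) :
    prefixHeight (true :: (w ++ [false])) (w.length + 2) =
      prefixHeight w w.length := by
  rw [show w.length + 2 = (w.length + 1) + 1 by ring, ph_cons_true,
    ph_append_ge _ _ (by omega)]
  have : prefixHeight [false] (w.length + 1 - w.length) = -1 := by
    rw [show w.length + 1 - w.length = 1 by omega]
    simp [prefixHeight]
  rw [this]; ring

lemma valley_map1 (w : List Bool) (i : ℕ) :
    IsValley (true :: (w ++ [false])) i ↔ ∃ j, i = j + 1 ∧ IsValley w j := by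
  constructor
  · rintro ⟨h1, h2⟩
    rcases i with _ | j
    · simp at h1
    · refine ⟨j, rfl, ?_, ?_⟩
      · -- w'[j+1]? = (w ++ [false])[j]?
        rw [List.getElem?_cons_succ] at h1
        rcases lt_or_ge j w.length with hj | hj
        · rwa [List.getElem?_append_left hj] at h1
        · -- then (w++[false])[j]? is false only at j = len; then next is none
          exfalso
          rw [List.getElem?_cons_succ] at h2
          rcases eq_or_lt_of_le hj with hj' | hj'
          · rw [List.getElem?_append_right (by omega)] at h2
            have : j + 1 - w.length = 1 := by omega
            rw [this] at h2
            simp at h2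
          · rw [List.getElem?_eq_none (by simp; omega)] at h1
            exact nomatch h1
      · rw [List.getElem?_cons_succ] at h2
        have hj : j < w.length := by
          by_contra hc
          push_neg at hc
          rw [List.getElem?_eq_none (by simp; omega)] at h2
          exact nomatch h2
        have hj1 : j + 1 < w.length := by
          by_contra hc
          push_neg at hc
          have : j + 1 = w.length := by omega
          rw [List.getElem?_append_right (by omega), show j + 1 - w.length = 0 by omega] at h2
          simp at h2
        rwa [List.getElem?_append_left hj1] at h2
  · rintro ⟨j, rfl, hf, ht⟩
    have hj : j < w.length := by
      by_contra hc
      rw [List.getElem?_eq_none (by omega)] at hf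
      exact nomatch hf
    have hj1 : j + 1 < w.length := by
      by_contra hc
      rw [List.getElem?_eq_none (by omega)] at ht
      exact nomatch ht
    exact ⟨by rw [List.getElem?_cons_succ, List.getElem?_append_left hj]; exact hf,
      by rw [List.getElem?_cons_succ, List.getElem?_append_left hj1]; exact ht⟩

lemma mem_map1 {n : ℕ} {w : List Bool} (hw : w ∈ nondecDyck n) :
    true :: (w ++ [false]) ∈ nondecDyck (n + 1) := by
  obtain ⟨hlen, ⟨hpos, hend⟩, hval⟩ := hw
  have hL : (true :: (w ++ [false])).length = 2 * (n + 1) := by simp [hlen]; ring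
  refine ⟨hL, ⟨?_, ?_⟩, ?_⟩
  · intro i hi
    rcases i with _ | j
    · rw [ph_zero]
    · rcases le_or_gt j w.length with hj | hj
      · rw [ph_map1 w hj]
        have := hpos j hj
        omega
      · have : j + 1 = w.length + 2 := by
          simp [hlen] at hi ⊢
          omega
        rw [this, ph_map1_end, hend]
  · rw [show (true :: (w ++ [false])).length = w.length + 2 by simp, ph_map1_end, hend]
  · intro i j hi hj hij
    obtain ⟨i', rfl, hi'⟩ := (valley_map1 w i).1 hi
    obtain ⟨j', rfl, hj'⟩ := (valley_map1 w j).1 hj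
    have hi'l : i' + 1 ≤ w.length := by
      rcases hi' with ⟨_, h2⟩
      by_contra hc
      rw [List.getElem?_eq_none (by omega)] at h2
      exact nomatch h2
    have hj'l : j' + 1 ≤ w.length := by
      rcases hj' with ⟨_, h2⟩
      by_contra hc
      rw [List.getElem?_eq_none (by omega)] at h2
      exact nomatch h2
    rw [ph_map1 w hi'l, ph_map1 w hj'l]
    have := hval i' j' hi' hj' (by omega)
    omega
-- stage 4: map2 : w ↦ pyr k ++ w
lemma dyck_head {w : List Bool} (h : IsDyckWord w) (hne : w ≠ []) : w[0]? = some true := by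
  have hl : 0 < w.length := List.length_pos_iff.2 hne
  rcases hb : w[0]? with _ | b
  · rw [List.getElem?_eq_none_iff] at hb; omega
  · cases b
    · exfalso
      have h1 := ph_step_false w 0 hb
      rw [ph_zero, zero_sub] at h1
      have h2 := h.1 1 hl
      rw [h1] at h2
      norm_num at h2
    · rfl

lemma ph_map2_le {k i : ℕ} (w : List Bool) (h : i ≤ 2 * k) :
    prefixHeight (pyr k ++ w) i = prefixHeight (pyr k) i :=
  ph_append_le _ _ (by rwa [pyr_length])

lemma ph_map2_ge {k i : ℕ} (w : List Bool) (h : 2 * k ≤ i) :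
    prefixHeight (pyr k ++ w) i = prefixHeight w (i - 2 * k) := by
  rw [ph_append_ge _ _ (by rwa [pyr_length]), pyr_length, ph_pyr_end, zero_add]

lemma getElem?_map2_left {k i : ℕ} (w : List Bool) (h : i < 2 * k) :
    (pyr k ++ w)[i]? = (pyr k)[i]? :=
  List.getElem?_append_left (by rwa [pyr_length])

lemma getElem?_map2_right {k i : ℕ} (w : List Bool) (h : 2 * k ≤ i) :
    (pyr k ++ w)[i]? = w[i - 2 * k]? := by
  rw [List.getElem?_append_right (by rwa [pyr_length]), pyr_length]

lemma valley_map2 {k : ℕ} (hk : 1 ≤ k) {w : List Bool} (hw : w[0]? = some true) (i : ℕ) :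
    IsValley (pyr k ++ w) i ↔ i = 2 * k - 1 ∨ ∃ j, i = 2 * k + j ∧ IsValley w j := by
  constructor
  · rintro ⟨h1, h2⟩
    rcases lt_or_ge i (2 * k) with hi | hi
    · left
      by_contra hc
      have hi1 : i + 1 < 2 * k := by omega
      rw [getElem?_map2_left w hi1, pyr_getElem? k (i+1)] at h2
      have hik : ¬ (i + 1 < k) := by
        intro hlt
        rw [getElem?_map2_left w hi, pyr_getElem? k i, if_pos (by omega)] at h1
        exact Bool.noConfusion (Option.some.inj h1)
      rw [if_neg hik, if_pos hi1] at h2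
      exact Bool.noConfusion (Option.some.inj h2)
    · right
      refine ⟨i - 2 * k, by omega, ?_, ?_⟩
      · rwa [getElem?_map2_right w hi] at h1
      · rw [getElem?_map2_right w (by omega), show i + 1 - 2*k = i - 2*k + 1 by omega] at h2
        exact h2
  · rintro (rfl | ⟨j, rfl, hj1, hj2⟩)
    · constructor
      · rw [getElem?_map2_left w (by omega), pyr_getElem? k _, if_neg (by omega),
          if_pos (by omega)]
      · rw [show 2*k - 1 + 1 = 2*k by omega, getElem?_map2_right w le_rfl]
        simpa using hw
    · refine ⟨?_, ?_⟩
      · rw [getElem?_map2_right w (by omega)]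
        simpa using hj1
      · rw [getElem?_map2_right w (by omega), show 2*k + j + 1 - 2*k = j + 1 by omega]
        exact hj2

lemma mem_map2 {k m : ℕ} (hk : 1 ≤ k) (hm : 1 ≤ m) {w : List Bool}
    (hw : w ∈ nondecDyck m) : pyr k ++ w ∈ nondecDyck (k + m) := by
  obtain ⟨hlen, ⟨hpos, hend⟩, hval⟩ := hw
  have hne : w ≠ [] := by
    intro h; rw [h] at hlen; simp at hlen; omega
  have hw0 : w[0]? = some true := dyck_head ⟨hpos, hend⟩ hne
  have hL : (pyr k ++ w).length = 2 * (k + m) := by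
    rw [List.length_append, pyr_length, hlen]; ring
  refine ⟨hL, ⟨?_, ?_⟩, ?_⟩
  · intro i hi
    rcases le_or_gt i (2 * k) with h | h
    · rw [ph_map2_le w h]
      rcases Nat.eq_zero_or_pos i with rfl | hi0
      · rw [ph_zero]
      · rcases eq_or_lt_of_le h with rfl | h'
        · rw [ph_pyr_end]
        · exact (ph_pyr_pos k i hi0 h').le
    · rw [ph_map2_ge w h.le]
      exact hpos _ (by rw [hL] at hi; omega)
  · rw [hL, ph_map2_ge w (by omega), show 2 * (k + m) - 2 * k = w.length by omega]
    exact hend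
  · intro i j hi hj hij
    have alt : ∀ i, IsValley (pyr k ++ w) i → i = 2*k - 1 ∨
        ∃ j', i = 2*k + j' ∧ IsValley w j' := fun i hi => (valley_map2 hk hw0 i).1 hi
    have altval : ∀ j', IsValley w j' →
        prefixHeight (pyr k ++ w) (2*k + j' + 1) = prefixHeight w (j' + 1) := by
      intro j' _
      rw [show 2*k + j' + 1 = 2*k + (j'+1) by ring, ph_map2_ge w (by omega)]
      congr 1; omega
    have altbase : prefixHeight (pyr k ++ w) (2*k - 1 + 1) = 0 := by
      rw [show 2*k - 1 + 1 = 2*k by omega, ph_map2_le w le_rfl, ph_pyr_end]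
    have valpos : ∀ j', IsValley w j' → 0 ≤ prefixHeight w (j' + 1) := by
      intro j' ⟨h1, _⟩
      refine hpos (j' + 1) ?_
      by_contra hc
      rw [List.getElem?_eq_none (by omega)] at h1
      exact nomatch h1
    rcases alt i hi with rfl | ⟨i', rfl, hi'⟩ <;> rcases alt j hj with hje | ⟨j', rfl, hj'⟩
    · rw [hje]
    · rw [altbase, altval j' hj']
      exact valpos j' hj'
    · subst hje; omega
    · rw [altval i' hi', altval j' hj']
      exact hval i' j' hi' hj' (by omega)
-- stage 5: decomposition of a nondecreasing Dyck word
lemma getElem?_tf {w : List Bool} {i : ℕ} (h : i < w.length) :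
    w[i]? = some true ∨ w[i]? = some false := by
  rcases hb : w[i]? with _ | b
  · rw [List.getElem?_eq_none_iff] at hb; omega
  · cases b
    · right; rfl
    · left; rfl

lemma cover {n : ℕ} {w : List Bool} (hw : w ∈ nondecDyck (n + 1)) :
    (∃ w', w' ∈ nondecDyck n ∧ w = true :: (w' ++ [false])) ∨
    (∃ k, 1 ≤ k ∧ k ≤ n ∧ ∃ w2 ∈ nondecDyck (n + 1 - k), w = pyr k ++ w2) := by
  obtain ⟨hlen, ⟨hpos, hend⟩, hval⟩ := hw
  have hne : w ≠ [] := by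
    intro h; rw [h] at hlen; simp at hlen
  have hw0 : w[0]? = some true := dyck_head ⟨hpos, hend⟩ hne
  have hex : ∃ i, 1 ≤ i ∧ prefixHeight w i = 0 := ⟨w.length, by omega, hend⟩
  classical
  obtain ⟨i0, ⟨hi01, hi0z⟩, hmin⟩ :
      ∃ i0, (1 ≤ i0 ∧ prefixHeight w i0 = 0) ∧
        ∀ i, i < i0 → ¬ (1 ≤ i ∧ prefixHeight w i = 0) :=
    ⟨Nat.find hex, Nat.find_spec hex, fun i hi => Nat.find_min hex hi⟩
  have hi0L : i0 ≤ w.length := by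
    by_contra hc
    exact hmin w.length (by omega) ⟨by omega, hend⟩
  have hi0min : ∀ i, 1 ≤ i → i < i0 → 1 ≤ prefixHeight w i := by
    intro i h1 h2
    have hne0 : ¬ (1 ≤ i ∧ prefixHeight w i = 0) := hmin i h2
    have hge : 0 ≤ prefixHeight w i := hpos i (by omega)
    omega
  have hph1 : prefixHeight w 1 = 1 := by
    rw [ph_step_true w 0 hw0, ph_zero]; ring
  have hi02 : 2 ≤ i0 := by
    rcases Nat.lt_or_ge i0 2 with h | h
    · exfalso
      have h1 : i0 = 1 := by omega
      rw [h1, hph1] at hi0z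
      omega
    · exact h
  -- the step before i0 is a D-step
  have hdown : w[i0 - 1]? = some false := by
    rcases getElem?_tf (show i0 - 1 < w.length by omega) with h | h
    · exfalso
      have h1 := ph_step_true w (i0 - 1) h
      rw [show i0 - 1 + 1 = i0 by omega] at h1
      have h2 := hi0min (i0 - 1) (by omega) (by omega)
      omega
    · exact h
  rcases eq_or_lt_of_le hi0L with hi0eq | hi0lt
  · -- Case A : w = true :: w' ++ [false]
    left
    obtain ⟨a, t, rfl⟩ := List.exists_cons_of_ne_nil hne
    have ha : a = true := by
      rw [List.getElem?_cons_zero] at hw0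
      exact Option.some.inj hw0
    subst ha
    rcases List.eq_nil_or_concat t with rfl | ⟨w', b, ht⟩
    · exfalso
      have h1 : (true :: ([] : List Bool)).length = 1 := rfl
      omega
    · rw [List.concat_eq_append] at ht
      subst ht
      have hlw' : w'.length = 2 * n := by
        simp at hlen; omega
      have hLw : (true :: (w' ++ [b])).length = w'.length + 2 := by simp
      have hb : b = false := by
        have h1 : (true :: (w' ++ [b]))[i0 - 1]? = some false := hdown
        rw [hi0eq] at h1
        rw [hLw, show w'.length + 2 - 1 = w'.length + 1 by omega,
          List.getElem?_cons_succ, List.getElem?_concat_length] at h1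
        exact Option.some.inj h1
      subst hb
      refine ⟨w', ⟨hlw', ⟨?_, ?_⟩, ?_⟩, rfl⟩
      · intro i hi
        have h1 : prefixHeight (true :: (w' ++ [false])) (i + 1) = 1 + prefixHeight w' i :=
          ph_map1 w' hi
        have h2 := hi0min (i + 1) (by omega) (by rw [hi0eq, hLw]; omega)
        omega
      · have h1 := ph_map1_end w'
        rw [hLw] at hend
        rw [hend] at h1
        omega
      · intro i j hi hj hij
        have hvi : IsValley (true :: (w' ++ [false])) (i + 1) :=
          (valley_map1 w' (i+1)).2 ⟨i, rfl, hi⟩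
        have hvj : IsValley (true :: (w' ++ [false])) (j + 1) :=
          (valley_map1 w' (j+1)).2 ⟨j, rfl, hj⟩
        have h := hval (i+1) (j+1) hvi hvj (by omega)
        have hil : i + 1 ≤ w'.length := by
          rcases hi with ⟨_, h2⟩
          by_contra hc
          rw [List.getElem?_eq_none (by omega)] at h2
          exact nomatch h2
        have hjl : j + 1 ≤ w'.length := by
          rcases hj with ⟨_, h2⟩
          by_contra hc
          rw [List.getElem?_eq_none (by omega)] at h2
          exact nomatch h2
        rw [ph_map1 w' hil, ph_map1 w' hjl] at h
        omega
  · -- Case B : w = pyr k ++ w2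
    right
    have hup : w[i0]? = some true := by
      rcases getElem?_tf (show i0 < w.length by omega) with h | h
      · exact h
      · exfalso
        have h1 := ph_step_false w i0 h
        rw [hi0z] at h1
        have h2 := hpos (i0 + 1) (by omega)
        omega
    have hjv : IsValley w (i0 - 1) := ⟨hdown, by rw [show i0 - 1 + 1 = i0 by omega]; exact hup⟩
    have hjalt : prefixHeight w (i0 - 1 + 1) = 0 := by
      rw [show i0 - 1 + 1 = i0 by omega]; exact hi0z
    have hnov : ∀ i, i + 1 < i0 → ¬ (w[i]? = some false ∧ w[i+1]? = some true) := by
      rintro i hi ⟨h1, h2⟩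
      have hv : IsValley w i := ⟨h1, h2⟩
      have h3 := hval i (i0 - 1) hv hjv (by omega)
      rw [hjalt] at h3
      have h4 := hi0min (i + 1) (by omega) hi
      omega
    have hll : (w.take i0).length = i0 := by
      rw [List.length_take]; omega
    have hlget : ∀ i, i < i0 → (w.take i0)[i]? = w[i]? := by
      intro i hi
      simp [List.getElem?_take, hi]
    have hstruct := no_valley_structure (w.take i0) (by
      rintro i ⟨h1, h2⟩
      have hi1 : i + 1 < i0 := by
        by_contra hc
        rw [List.getElem?_eq_none (by omega)] at h2
        exact nomatch h2
      rw [hlget i (by omega)] at h1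
      rw [hlget (i+1) hi1] at h2
      exact hnov i hi1 ⟨h1, h2⟩)
    have hcnt : ((w.take i0).count true : ℤ) - ((w.take i0).count false : ℤ) = 0 := hi0z
    have hcnt2 : ((w.take i0).count true : ℤ) + ((w.take i0).count false : ℤ) = i0 := by
      rw [count_list (w.take i0), hll]
    have hk1 : (w.take i0).count true = (w.take i0).count false := by omega
    have hik : i0 = 2 * (w.take i0).count true := by omega
    have hpyrl : w.take i0 = pyr ((w.take i0).count true) := by
      conv_lhs => rw [hstruct]
      rw [pyr, ← hk1]
    set k := (w.take i0).count true with hkdef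
    have hkn1 : 1 ≤ k := by omega
    have hkn2 : k ≤ n := by omega
    have hsplit : w = pyr k ++ w.drop i0 := by
      conv_lhs => rw [← List.take_append_drop i0 w, hpyrl]
    have hlw2 : (w.drop i0).length = 2 * (n + 1 - k) := by
      rw [List.length_drop]; omega
    have hw20 : (w.drop i0)[0]? = some true := by
      rw [List.getElem?_drop, Nat.add_zero]; exact hup
    refine ⟨k, hkn1, hkn2, w.drop i0, ⟨hlw2, ⟨?_, ?_⟩, ?_⟩, hsplit⟩
    · intro i hi
      have h1 := hpos (2 * k + i) (by omega)
      rw [hsplit, ph_map2_ge _ (by omega), show 2*k + i - 2*k = i by omega] at h1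
      exact h1
    · have h1 := hend
      rw [hsplit] at h1
      rw [show (pyr k ++ w.drop i0).length = 2*k + (w.drop i0).length by
        rw [List.length_append, pyr_length], ph_map2_ge _ (by omega),
        show 2*k + (w.drop i0).length - 2*k = (w.drop i0).length by omega] at h1
      exact h1
    · intro i j hi hj hij
      have hvi : IsValley w (2*k + i) := by
        conv_lhs => rw [hsplit]
        exact (valley_map2 hkn1 hw20 _).2 (Or.inr ⟨i, rfl, hi⟩)
      have hvj : IsValley w (2*k + j) := by
        conv_lhs => rw [hsplit]
        exact (valley_map2 hkn1 hw20 _).2 (Or.inr ⟨j, rfl, hj⟩)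
      have h := hval _ _ hvi hvj (by omega)
      rw [hsplit, show 2*k + i + 1 = 2*k + (i+1) by ring, show 2*k + j + 1 = 2*k + (j+1) by ring,
        ph_map2_ge _ (by omega), ph_map2_ge _ (by omega),
        show 2*k + (i+1) - 2*k = i + 1 by omega, show 2*k + (j+1) - 2*k = j + 1 by omega] at h
      exact h
-- stage 6: returns counts
lemma numReturns_append (x y : List Bool) (hx : prefixHeight x x.length = 0) :
    numReturns (x ++ y) = numReturns x + numReturns y := by
  classical
  unfold numReturns
  have hL : (x ++ y).length = x.length + y.length := List.length_append
  rw [hL]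
  have hsplit : Finset.Icc 1 (x.length + y.length) =
      Finset.Icc 1 x.length ∪ Finset.Icc (x.length + 1) (x.length + y.length) := by
    ext i
    simp only [Finset.mem_union, Finset.mem_Icc]
    omega
  rw [hsplit, Finset.filter_union]
  have h1 : (Finset.Icc 1 x.length).filter (fun i => prefixHeight (x ++ y) i = 0) =
      (Finset.Icc 1 x.length).filter (fun i => prefixHeight x i = 0) := by
    apply Finset.filter_congr
    intro i hi
    rw [Finset.mem_Icc] at hi
    rw [ph_append_le x y hi.2]
  have h2 : (Finset.Icc (x.length + 1) (x.length + y.length)).filter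
        (fun i => prefixHeight (x ++ y) i = 0) =
      ((Finset.Icc 1 y.length).filter (fun i => prefixHeight y i = 0)).image
        (fun i => i + x.length) := by
    ext i
    simp only [Finset.mem_filter, Finset.mem_Icc, Finset.mem_image]
    constructor
    · rintro ⟨⟨ha, hb⟩, hc⟩
      refine ⟨i - x.length, ⟨⟨by omega, by omega⟩, ?_⟩, by omega⟩
      rw [ph_append_ge x y (by omega), hx, zero_add] at hc
      exact hc
    · rintro ⟨j, ⟨⟨hj1, hj2⟩, hj3⟩, rfl⟩
      refine ⟨⟨by omega, by omega⟩, ?_⟩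
      rw [ph_append_ge x y (by omega), hx, zero_add, Nat.add_sub_cancel]
      exact hj3
  have hdisj : Disjoint ((Finset.Icc 1 x.length).filter (fun i => prefixHeight x i = 0))
      (((Finset.Icc 1 y.length).filter (fun i => prefixHeight y i = 0)).image
        (fun i => i + x.length)) := by
    rw [Finset.disjoint_left]
    intro a ha hb
    rw [Finset.mem_filter, Finset.mem_Icc] at ha
    simp only [Finset.mem_image, Finset.mem_filter, Finset.mem_Icc] at hb
    obtain ⟨j, ⟨⟨hj1, _⟩, _⟩, rfl⟩ := hb
    omega
  rw [h1, h2, Finset.card_union_of_disjoint hdisj, Finset.card_image_of_injective _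
    (add_left_injective x.length)]

lemma numReturns_pyr {k : ℕ} (hk : 1 ≤ k) : numReturns (pyr k) = 1 := by
  classical
  unfold numReturns
  rw [pyr_length]
  have : (Finset.Icc 1 (2 * k)).filter (fun i => prefixHeight (pyr k) i = 0) = {2 * k} := by
    ext i
    simp only [Finset.mem_filter, Finset.mem_Icc, Finset.mem_singleton]
    constructor
    · rintro ⟨⟨h1, h2⟩, h3⟩
      by_contra hc
      have := ph_pyr_pos k i h1 (by omega)
      omega
    · rintro rfl
      exact ⟨⟨by omega, le_rfl⟩, ph_pyr_end k⟩
  rw [this, Finset.card_singleton]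

lemma numReturns_map1 {n : ℕ} {w : List Bool} (hw : w ∈ nondecDyck n) :
    numReturns (true :: (w ++ [false])) = 1 := by
  classical
  obtain ⟨hlen, ⟨hpos, hend⟩, _⟩ := hw
  unfold numReturns
  have hL : (true :: (w ++ [false])).length = w.length + 2 := by simp
  rw [hL]
  have : (Finset.Icc 1 (w.length + 2)).filter
      (fun i => prefixHeight (true :: (w ++ [false])) i = 0) = {w.length + 2} := by
    ext i
    simp only [Finset.mem_filter, Finset.mem_Icc, Finset.mem_singleton]
    constructor
    · rintro ⟨⟨h1, h2⟩, h3⟩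
      by_contra hc
      have hi : i - 1 ≤ w.length := by omega
      rw [show i = (i - 1) + 1 by omega, ph_map1 w hi] at h3
      have := hpos (i - 1) hi
      omega
    · rintro rfl
      refine ⟨⟨by omega, le_rfl⟩, ?_⟩
      rw [ph_map1_end w, hend]
  rw [this, Finset.card_singleton]

-- membership rephrased for map2 with target semilength
lemma mem_map2' {k n : ℕ} (hk : 1 ≤ k) (hkn : k ≤ n) {w : List Bool}
    (hw : w ∈ nondecDyck (n + 1 - k)) : pyr k ++ w ∈ nondecDyck (n + 1) := by
  have := mem_map2 hk (show 1 ≤ n + 1 - k by omega) hw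
  rwa [show k + (n + 1 - k) = n + 1 by omega] at this

lemma nondecDyck_finite (n : ℕ) : (nondecDyck n).Finite :=
  Set.Finite.subset (List.finite_length_eq Bool (2*n)) (fun w hw => hw.1)

lemma nondecDyck_zero : nondecDyck 0 = {[]} := by
  ext w
  simp only [nondecDyck, Set.mem_setOf_eq, Set.mem_singleton_iff]
  constructor
  · rintro ⟨hlen, _⟩
    exact List.length_eq_zero_iff.1 (by omega)
  · rintro rfl
    refine ⟨by simp, ⟨⟨?_, ?_⟩, ?_⟩⟩
    · intro i _; simp [prefixHeight]
    · simp [prefixHeight]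
    · rintro i j ⟨h1, _⟩ _ _
      simp at h1
-- stage 7: Finset decomposition and recurrences
noncomputable def ndF (n : ℕ) : Finset (List Bool) := (nondecDyck_finite n).toFinset

lemma mem_ndF {n : ℕ} {w : List Bool} : w ∈ ndF n ↔ w ∈ nondecDyck n :=
  Set.Finite.mem_toFinset _

lemma card_ndF (n : ℕ) : (ndF n).card = numNondecDyck n :=
  (Set.ncard_eq_toFinset_card _ (nondecDyck_finite n)).symm

lemma totalReturns_eq (n : ℕ) : totalReturns n = ∑ w ∈ ndF n, numReturns w := by
  rw [totalReturns, ← Set.Finite.coe_toFinset (nondecDyck_finite n), finsum_mem_coe_finset]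
  rfl

lemma inj1 : Function.Injective (fun w : List Bool => true :: (w ++ [false])) := by
  intro a b h
  simp only [List.cons.injEq, true_and] at h
  exact List.append_cancel_right h

lemma inj2 (k : ℕ) : Function.Injective (fun w : List Bool => pyr k ++ w) := by
  intro a b h
  exact List.append_cancel_left h

lemma ne12 {n k : ℕ} (hk1 : 1 ≤ k) (hkn : k ≤ n) {w' w2 : List Bool}
    (hw' : w' ∈ nondecDyck n) (hw2 : w2 ∈ nondecDyck (n + 1 - k)) :
    true :: (w' ++ [false]) ≠ pyr k ++ w2 := by
  intro h
  have h1 : prefixHeight (true :: (w' ++ [false])) (2 * k) = 1 + prefixHeight w' (2*k - 1) := by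
    rw [show 2 * k = (2*k - 1) + 1 by omega]
    exact ph_map1 w' (by rw [hw'.1]; omega)
  have h2 : prefixHeight (pyr k ++ w2) (2 * k) = 0 := by
    rw [ph_map2_le w2 le_rfl, ph_pyr_end]
  have h3 : 0 ≤ prefixHeight w' (2*k - 1) := hw'.2.1.1 _ (by rw [hw'.1]; omega)
  rw [h, h2] at h1
  omega

lemma ne22 {k k' : ℕ} (hk : 1 ≤ k) (hkk : k < k') (w2 w2' : List Bool) :
    pyr k ++ w2 ≠ pyr k' ++ w2' := by
  intro h
  have h1 : prefixHeight (pyr k ++ w2) (2 * k) = 0 := by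
    rw [ph_map2_le w2 le_rfl, ph_pyr_end]
  have h2 : 0 < prefixHeight (pyr k' ++ w2') (2 * k) := by
    rw [ph_map2_le w2' (by omega)]
    exact ph_pyr_pos k' (2*k) (by omega) (by omega)
  rw [← h, h1] at h2
  omega

lemma ndF_succ (n : ℕ) :
    ndF (n + 1) = (ndF n).image (fun w => true :: (w ++ [false])) ∪
      (Finset.Icc 1 n).biUnion
        (fun k => (ndF (n + 1 - k)).image (fun w => pyr k ++ w)) := by
  ext w
  simp only [Finset.mem_union, Finset.mem_image, Finset.mem_biUnion, mem_ndF, Finset.mem_Icc]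
  constructor
  · intro hw
    rcases cover hw with ⟨w', hw', rfl⟩ | ⟨k, hk1, hkn, w2, hw2, rfl⟩
    · exact Or.inl ⟨w', hw', rfl⟩
    · exact Or.inr ⟨k, ⟨hk1, hkn⟩, w2, hw2, rfl⟩
  · rintro (⟨w', hw', rfl⟩ | ⟨k, ⟨hk1, hkn⟩, w2, hw2, rfl⟩)
    · exact mem_map1 hw'
    · exact mem_map2' hk1 hkn hw2

lemma disj_main (n : ℕ) :
    Disjoint ((ndF n).image (fun w => true :: (w ++ [false])))
      ((Finset.Icc 1 n).biUnion
        (fun k => (ndF (n + 1 - k)).image (fun w => pyr k ++ w))) := by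
  rw [Finset.disjoint_left]
  intro a ha hb
  simp only [Finset.mem_image, mem_ndF] at ha
  simp only [Finset.mem_biUnion, Finset.mem_image, mem_ndF, Finset.mem_Icc] at hb
  obtain ⟨w', hw', rfl⟩ := ha
  obtain ⟨k, ⟨hk1, hkn⟩, w2, hw2, heq⟩ := hb
  exact ne12 hk1 hkn hw' hw2 heq.symm

lemma disj_biUnion (n : ℕ) :
    (↑(Finset.Icc 1 n) : Set ℕ).PairwiseDisjoint
      (fun k => (ndF (n + 1 - k)).image (fun w => pyr k ++ w)) := by
  intro k hk k' hk' hne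
  simp only [Finset.coe_Icc, Set.mem_Icc] at hk hk'
  rw [Function.onFun, Finset.disjoint_left]
  intro a ha hb
  simp only [Finset.mem_image, mem_ndF] at ha hb
  obtain ⟨w2, hw2, rfl⟩ := ha
  obtain ⟨w2', hw2', heq⟩ := hb
  rcases lt_or_gt_of_ne hne with h | h
  · exact ne22 hk.1 h w2 w2' heq.symm
  · exact ne22 hk'.1 h w2' w2 heq

lemma d_rec (n : ℕ) :
    numNondecDyck (n + 1) = numNondecDyck n + ∑ k ∈ Finset.Icc 1 n, numNondecDyck (n + 1 - k) := by
  classical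
  rw [← card_ndF, ndF_succ n, Finset.card_union_of_disjoint (disj_main n),
    Finset.card_biUnion, Finset.card_image_of_injective _ inj1, card_ndF]
  · congr 1
    apply Finset.sum_congr rfl
    intro k _
    rw [Finset.card_image_of_injective _ (inj2 k), card_ndF]
  · intro k hk k' hk' hne
    exact disj_biUnion n (by simpa using hk) (by simpa using hk') hne

lemma r_rec (n : ℕ) :
    totalReturns (n + 1) = numNondecDyck n +
      ∑ k ∈ Finset.Icc 1 n, (numNondecDyck (n + 1 - k) + totalReturns (n + 1 - k)) := by
  classical
  rw [totalReturns_eq, ndF_succ n, Finset.sum_union (disj_main n),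
    Finset.sum_biUnion (disj_biUnion n)]
  congr 1
  · rw [Finset.sum_image (fun a _ b _ h => inj1 h)]
    rw [← card_ndF]
    rw [Finset.card_eq_sum_ones]
    apply Finset.sum_congr rfl
    intro w hw
    exact numReturns_map1 (mem_ndF.1 hw)
  · apply Finset.sum_congr rfl
    intro k hk
    rw [Finset.mem_Icc] at hk
    rw [Finset.sum_image (fun a _ b _ h => inj2 k h)]
    have : ∀ w ∈ ndF (n + 1 - k), numReturns (pyr k ++ w) = 1 + numReturns w := by
      intro w _
      rw [numReturns_append (pyr k) w (by rw [pyr_length]; exact ph_pyr_end k),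
        numReturns_pyr hk.1]
    rw [Finset.sum_congr rfl this, Finset.sum_add_distrib, ← card_ndF,
      Finset.card_eq_sum_ones, totalReturns_eq]
-- stage 8: closed forms
lemma sum_Icc_one (f : ℕ → ℕ) (n : ℕ) :
    ∑ m ∈ Finset.Icc 1 n, f m = ∑ j ∈ Finset.range n, f (j + 1) := by
  induction n with
  | zero => simp
  | succ n ih =>
    rw [Finset.sum_range_succ, ← ih, show Finset.Icc 1 (n+1) = insert (n+1) (Finset.Icc 1 n) by
      ext i; simp [Finset.mem_Icc]; omega, Finset.sum_insert (by simp)]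
    ring

lemma sum_reflect (f : ℕ → ℕ) (n : ℕ) :
    ∑ k ∈ Finset.Icc 1 n, f (n + 1 - k) = ∑ k ∈ Finset.Icc 1 n, f k := by
  rw [sum_Icc_one, sum_Icc_one (f := f), ← Finset.sum_range_reflect (fun j => f (j+1)) n]
  apply Finset.sum_congr rfl
  intro j hj
  rw [Finset.mem_range] at hj
  congr 1
  omega

lemma fib_sum1 (n : ℕ) : ∑ j ∈ Finset.range n, Nat.fib (2*j+1) = Nat.fib (2*n) := by
  induction n with
  | zero => simp
  | succ n ih =>
    rw [Finset.sum_range_succ, ih]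
    have h := Nat.fib_add_two (n := 2*n)
    rw [show 2*(n+1) = 2*n+2 by ring]
    omega

lemma fib_sum2 (n : ℕ) : ∑ j ∈ Finset.range n, Nat.fib (2*j+3) + 1 = Nat.fib (2*n+2) := by
  induction n with
  | zero => simp
  | succ n ih =>
    rw [Finset.sum_range_succ]
    have h := Nat.fib_add_two (n := 2*n+2)
    rw [show 2*(n+1)+2 = 2*n+2+2 by ring]
    rw [show 2*n+2+1 = 2*n+3 by ring] at h
    omega

lemma pow_sum (n : ℕ) : ∑ j ∈ Finset.range n, 2^j + 1 = 2^n := by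
  induction n with
  | zero => simp
  | succ n ih =>
    rw [Finset.sum_range_succ, pow_succ, ← ih]
    ring

lemma numNondecDyck_zero : numNondecDyck 0 = 1 := by
  rw [numNondecDyck, nondecDyck_zero, Set.ncard_singleton]

lemma d_fib : ∀ n, numNondecDyck (n + 1) = Nat.fib (2*n + 1) := by
  intro n
  induction n using Nat.strong_induction_on with
  | _ n ih =>
    have hsum : ∑ k ∈ Finset.Icc 1 n, numNondecDyck (n + 1 - k) = Nat.fib (2*n) := by
      rw [sum_reflect, sum_Icc_one, ← fib_sum1 n]
      apply Finset.sum_congr rfl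
      intro j hj
      rw [Finset.mem_range] at hj
      exact ih j hj
    rw [d_rec n, hsum]
    rcases n with _ | m
    · simp [numNondecDyck_zero]
    · rw [ih m (by omega)]
      have h := Nat.fib_add_two (n := 2*m+1)
      rw [show 2*(m+1) = 2*m+1+1 by ring]
      rw [show 2*m+1+1+1 = 2*m+1+2 by ring]
      omega

lemma r_zero : totalReturns 0 = 0 := by
  rw [totalReturns_eq]
  have h : ndF 0 = {[]} := by
    ext w
    rw [mem_ndF, nondecDyck_zero]
    simp
  rw [h, Finset.sum_singleton]
  simp [numReturns]

lemma r_fib : ∀ n, totalReturns (n + 1) + 2^n = Nat.fib (2*n + 3) := by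
  intro n
  induction n using Nat.strong_induction_on with
  | _ n ih =>
    have hd : ∑ k ∈ Finset.Icc 1 n, numNondecDyck (n + 1 - k) = Nat.fib (2*n) := by
      rw [sum_reflect, sum_Icc_one, ← fib_sum1 n]
      apply Finset.sum_congr rfl
      intro j hj
      rw [Finset.mem_range] at hj
      exact d_fib j
    have hdn : numNondecDyck n + Nat.fib (2*n) = Nat.fib (2*n+1) := by
      rcases n with _ | m
      · simp [numNondecDyck_zero]
      · rw [d_fib m, show 2*(m+1)+1 = (2*m+1)+2 by ring, Nat.fib_add_two,
          show 2*(m+1) = (2*m+1)+1 by ring]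
    have hr : ∑ k ∈ Finset.Icc 1 n, totalReturns (n + 1 - k) + 2^n = Nat.fib (2*n+2) := by
      have h1 : ∑ k ∈ Finset.Icc 1 n, totalReturns (n + 1 - k)
          = ∑ j ∈ Finset.range n, totalReturns (j+1) := by
        rw [sum_reflect, sum_Icc_one]
      have h2 : ∑ j ∈ Finset.range n, totalReturns (j+1) + ∑ j ∈ Finset.range n, 2^j
          = ∑ j ∈ Finset.range n, Nat.fib (2*j+3) := by
        rw [← Finset.sum_add_distrib]
        apply Finset.sum_congr rfl
        intro j hj
        rw [Finset.mem_range] at hj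
        exact ih j hj
      have h3 := fib_sum2 n
      have h4 := pow_sum n
      omega
    rw [r_rec n, Finset.sum_add_distrib]
    have : numNondecDyck n + (∑ k ∈ Finset.Icc 1 n, numNondecDyck (n+1-k)
        + ∑ k ∈ Finset.Icc 1 n, totalReturns (n+1-k)) + 2^n
        = Nat.fib (2*n+1) + Nat.fib (2*n+2) := by
      rw [hd]
      omega
    rw [this]
    have h := Nat.fib_add_two (n := 2*n+1)
    rw [show 2*n+3 = 2*n+1+2 by ring]
    rw [show 2*n+1+1 = 2*n+2 by ring] at h
    omega

open Real goldenRatio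

/-- `r(n)/d(n) → (3 + √5)/2` as `n → ∞`: the average degree of the root of a
random Elena tree tends to `(3 + √5)/2`. -/
theorem avg_root_degree :
    Filter.Tendsto
      (fun n : ℕ => (totalReturns n : ℝ) / (numNondecDyck n : ℝ))
      Filter.atTop (nhds ((3 + Real.sqrt 5) / 2)) := by
  have hφ : (0:ℝ) < φ := goldenRatio_pos
  have hφ1 : (1:ℝ) < φ := one_lt_goldenRatio
  have hψ0 : ψ < 0 := goldenConj_neg
  have hψ1 : (-1:ℝ) < ψ := neg_one_lt_goldenConj
  have hs5 : (0:ℝ) < √5 := by positivity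
  have hgold2 : φ^2 = (3 + √5)/2 := by
    rw [goldenRatio_sq, goldenRatio]
    ring
  have hq1 : (0:ℝ) ≤ (ψ/φ)^2 := sq_nonneg _
  have hq1' : (ψ/φ)^2 < 1 := by
    rw [div_pow, div_lt_one (by positivity)]
    nlinarith
  have hq2 : (0:ℝ) ≤ 2/φ^2 := by positivity
  have hq2' : 2/φ^2 < 1 := by
    rw [div_lt_one (by positivity), goldenRatio_sq]
    linarith
  have t1 : Filter.Tendsto (fun n : ℕ => ((ψ/φ)^2)^n) Filter.atTop (nhds 0) :=
    tendsto_pow_atTop_nhds_zero_of_lt_one hq1 hq1'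
  have t2 : Filter.Tendsto (fun n : ℕ => (2/φ^2)^n) Filter.atTop (nhds 0) :=
    tendsto_pow_atTop_nhds_zero_of_lt_one hq2 hq2'
  rw [← Filter.tendsto_add_atTop_iff_nat 1]
  have hBpos : ∀ n : ℕ, (0:ℝ) < 1 - (ψ/φ) * ((ψ/φ)^2)^n := by
    intro n
    have h1 : (ψ/φ) < 0 := div_neg_of_neg_of_pos hψ0 hφ
    have h2 : (0:ℝ) ≤ ((ψ/φ)^2)^n := pow_nonneg hq1 n
    nlinarith
  have key : ∀ n : ℕ, (totalReturns (n+1) : ℝ) / (numNondecDyck (n+1) : ℝ) =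
      (φ^2 - (ψ^3/φ) * ((ψ/φ)^2)^n - (√5/φ) * (2/φ^2)^n) /
      (1 - (ψ/φ) * ((ψ/φ)^2)^n) := by
    intro n
    have hrn := r_fib n
    have hr : (totalReturns (n+1) : ℝ) = (Nat.fib (2*n+3) : ℝ) - 2^n := by
      have h2 : ((totalReturns (n+1) : ℝ)) + 2^n = (Nat.fib (2*n+3) : ℝ) := by
        exact_mod_cast congrArg (fun m : ℕ => (m : ℝ)) hrn
      linarith
    have hd : (numNondecDyck (n+1) : ℝ) = (Nat.fib (2*n+1) : ℝ) :=
      congrArg (fun m : ℕ => (m : ℝ)) (d_fib n)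
    have hdpos : ((numNondecDyck (n+1) : ℝ)) ≠ 0 := by
      rw [hd]
      have : 0 < Nat.fib (2*n+1) := Nat.fib_pos.2 (by omega)
      positivity
    rw [div_eq_div_iff hdpos (ne_of_gt (hBpos n))]
    have e1 : φ^(2*n+3) = φ^3 * (φ^2)^n := by
      rw [show 2*n+3 = 3 + 2*n by ring, pow_add, pow_mul]
    have e2 : ψ^(2*n+3) = ψ^3 * (ψ^2)^n := by
      rw [show 2*n+3 = 3 + 2*n by ring, pow_add, pow_mul]
    have e3 : φ^(2*n+1) = φ * (φ^2)^n := by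
      rw [show 2*n+1 = 1 + 2*n by ring, pow_add, pow_mul, pow_one]
    have e4 : ψ^(2*n+1) = ψ * (ψ^2)^n := by
      rw [show 2*n+1 = 1 + 2*n by ring, pow_add, pow_mul, pow_one]
    have e5 : ((ψ/φ)^2)^n = (ψ^2)^n / (φ^2)^n := by
      rw [div_pow, div_pow]
    have e6 : (2/φ^2)^n = (2:ℝ)^n / (φ^2)^n := div_pow 2 (φ^2) n
    have hane : ((φ^2)^n : ℝ) ≠ 0 := by positivity
    have hne : √5 ≠ 0 := ne_of_gt hs5
    have hφne : φ ≠ 0 := ne_of_gt hφ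
    rw [hr, hd, Real.coe_fib_eq, Real.coe_fib_eq, e1, e2, e3, e4, e5, e6]
    field_simp
  have hlim : Filter.Tendsto
      (fun n : ℕ => (φ^2 - (ψ^3/φ) * ((ψ/φ)^2)^n - (√5/φ) * (2/φ^2)^n) /
        (1 - (ψ/φ) * ((ψ/φ)^2)^n)) Filter.atTop
      (nhds ((φ^2 - (ψ^3/φ) * 0 - (√5/φ) * 0) / (1 - (ψ/φ) * 0))) := by
    apply Filter.Tendsto.div
    · exact (tendsto_const_nhds.sub (tendsto_const_nhds.mul t1)).sub
        (tendsto_const_nhds.mul t2)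
    · exact tendsto_const_nhds.sub (tendsto_const_nhds.mul t1)
    · norm_num
  have hval : (φ^2 - (ψ^3/φ) * 0 - (√5/φ) * 0) / (1 - (ψ/φ) * 0) = (3 + √5)/2 := by
    rw [mul_zero, mul_zero, mul_zero, sub_zero, sub_zero, sub_zero, div_one]
    exact hgold2
  rw [hval] at hlim
  exact Filter.Tendsto.congr (fun n => (key n).symm) hlim
end

section
/- Let d(n) be the number of nondecreasing Dyck words of semilength n and let p(n) be the sum, over all nondecreasing Dyck words of semilength n, of the number of peaks. Then p(n)/(n·d(n)) converges, as n → ∞, to 1/√5; that is, the average number of leaves of a random Elena tree with n nodes is asymptotic to n/√5. -/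
/-- Number of peaks of `w`: occurrences of a U-step immediately followed by a
D-step. -/
def numPeaks (w : List Bool) : ℕ :=
  ((Finset.range w.length).filter fun i =>
    w[i]? = some true ∧ w[i + 1]? = some false).card

/-- `p n`: total number of peaks over all nondecreasing Dyck words of
semilength `n`. -/
noncomputable def totalPeaks (n : ℕ) : ℕ :=
  ∑ᶠ w ∈ nondecDyck n, numPeaks w

namespace NDD

open List

lemma ph_zero (w : List Bool) : prefixHeight w 0 = 0 := by simp [prefixHeight]

lemma ph_append (x y : List Bool) (i : ℕ) :
    prefixHeight (x ++ y) i = prefixHeight x i + prefixHeight y (i - x.length) := by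
  simp [prefixHeight, take_append, count_append]
  ring

lemma ph_of_le {w : List Bool} {i : ℕ} (h : w.length ≤ i) :
    prefixHeight w i = prefixHeight w w.length := by
  simp [prefixHeight, take_of_length_le h, take_of_length_le (le_refl w.length)]

lemma ph_succ {w : List Bool} {i : ℕ} (h : i < w.length) :
    prefixHeight w (i + 1) = prefixHeight w i + (if w[i]'h = true then 1 else -1) := by
  simp only [prefixHeight, take_succ, getElem?_eq_getElem h, Option.toList_some, count_append]
  cases hb : w[i]'h <;> simp [hb, count_singleton] <;> push_cast <;> ring

lemma ph_replicate_true (a i : ℕ) :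
    prefixHeight (replicate a true) i = min i a := by
  simp [prefixHeight, take_replicate, count_replicate]

lemma ph_replicate_false (a i : ℕ) :
    prefixHeight (replicate a false) i = -(min i a : ℤ) := by
  simp [prefixHeight, take_replicate, count_replicate]

lemma ph_take (w : List Bool) (m i : ℕ) :
    prefixHeight (w.take m) i = prefixHeight w (min i m) := by
  simp [prefixHeight, take_take]


open List

def peaksAux : List Bool → ℕ
  | [] => 0
  | b :: l => peaksAux l + if b = true ∧ l[0]? = some false then 1 else 0

lemma numPeaks_cons (b : Bool) (l : List Bool) :
    numPeaks (b :: l) = numPeaks l + if b = true ∧ l[0]? = some false then 1 else 0 := by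
  classical
  simp only [numPeaks, Finset.card_filter, length_cons]
  rw [Finset.sum_range_succ']
  congr 1
  · simp [getElem?_cons_succ, getElem?_cons_zero]

lemma numPeaks_eq_peaksAux (w : List Bool) : numPeaks w = peaksAux w := by
  induction w with
  | nil => simp [numPeaks, peaksAux]
  | cons b l ih => rw [numPeaks_cons, peaksAux, ih]

lemma peaksAux_append_singleton_false (l : List Bool) (h : l.getLast? = some false) :
    peaksAux (l ++ [false]) = peaksAux l := by
  induction l with
  | nil => simp at h
  | cons b t ih =>
    cases t with
    | nil =>
      simp only [getLast?_singleton, Option.some.injEq] at h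
      subst h
      simp [peaksAux]
    | cons c s =>
      have h' : (c :: s).getLast? = some false := by
        rwa [getLast?_cons_cons] at h
      have := ih h'
      simp only [cons_append, peaksAux, this]
      congr 1

lemma peaksAux_replicate_false_append (a : ℕ) (l : List Bool) :
    peaksAux (replicate a false ++ l) = peaksAux l := by
  induction a with
  | zero => simp
  | succ c ih => simp [replicate_succ, peaksAux, ih]

lemma peaksAux_replicate_true_append (a : ℕ) (l : List Bool) :
    peaksAux (replicate a true ++ l) =
      peaksAux l + if 1 ≤ a ∧ l[0]? = some false then 1 else 0 := by
  induction a with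
  | zero => simp
  | succ c ih =>
    rw [replicate_succ, cons_append, peaksAux, ih]
    cases c with
    | zero => simp
    | succ c' =>
      have : (replicate (c' + 1) true ++ l)[0]? = some true := by
        simp [replicate_succ]
      simp [this]


open List



/-! ### basic facts about Dyck words -/

lemma first_true {w : List Bool} (hd : IsDyckWord w) (hw : w ≠ []) :
    w[0]? = some true := by
  have h0 : 0 < w.length := length_pos_iff.mpr hw
  have h1 := ph_succ h0
  rw [ph_zero, zero_add] at h1
  have h2 := hd.1 1 h0
  rw [h1] at h2
  split at h2
  · rw [getElem?_eq_getElem h0]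
    next h => rw [h]
  · omega

lemma last_false {w : List Bool} (hd : IsDyckWord w) (hw : w ≠ []) :
    w.getLast? = some false := by
  have h0 : 0 < w.length := length_pos_iff.mpr hw
  obtain ⟨k, hk⟩ : ∃ k, w.length = k + 1 := ⟨w.length - 1, by omega⟩
  have hklt : k < w.length := by omega
  have h1 := ph_succ hklt
  have h2 := hd.2
  rw [hk] at h2
  rw [h2] at h1
  have h3 := hd.1 k (by omega)
  have hwk : w[k]'hklt = false := by
    by_contra hc
    simp only [Bool.not_eq_false] at hc
    rw [if_pos hc] at h1
    omega
  rw [getLast?_eq_getElem?]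
  have : w.length - 1 = k := by omega
  rw [this, getElem?_eq_getElem hklt, hwk]

lemma count_true_add_count_false (w : List Bool) :
    w.count true + w.count false = w.length := by
  induction w with
  | nil => simp
  | cons b t ih => cases b <;> simp [count_cons, ih] <;> omega

lemma dyck_counts {w : List Bool} {n : ℕ} (hd : IsDyckWord w) (hl : w.length = 2 * n) :
    w.count true = n ∧ w.count false = n := by
  have h2 := hd.2
  have h3 : w.take w.length = w := take_of_length_le (le_refl _)
  rw [prefixHeight, h3] at h2
  have h4 := count_true_add_count_false w
  omega

/-- a word with no DU factor is trues followed by falses -/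
lemma noDU_structure (x : List Bool)
    (h : ∀ i, ¬(x[i]? = some false ∧ x[i + 1]? = some true)) :
    x = replicate (x.count true) true ++ replicate (x.count false) false := by
  induction x with
  | nil => simp
  | cons b t ih =>
    have ht : ∀ i, ¬(t[i]? = some false ∧ t[i + 1]? = some true) := by
      intro i hi
      exact h (i + 1) (by simpa using hi)
    have ihs := ih ht
    cases b with
    | true =>
      simp only [count_cons]
      norm_num
      rw [replicate_succ, cons_append]
      rw [← ihs]
    | false =>
      have hct : t.count true = 0 := by
        by_contra hc
        have h0 : t[0]? = some true := by
          conv_lhs => rw [ihs]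
          rcases Nat.eq_zero_or_pos (t.count true) with h' | h'
          · omega
          · rw [getElem?_append_left (by simp [h'])]
            simp [getElem?_replicate, h']
        exact h 0 (by simp [h0])
      simp only [count_cons, hct]
      norm_num
      rw [hct] at ihs
      simp only [replicate_zero, nil_append] at ihs
      rw [replicate_succ]
      exact congrArg (false :: ·) ihs


/-! ### elevation and pyramids -/

def pyr (a : ℕ) : List Bool := List.replicate a true ++ List.replicate a false

def elev (P : List Bool) : List Bool := true :: (P ++ [false])

lemma elev_eq (P : List Bool) : elev P = [true] ++ (P ++ [false]) := rfl

lemma elev_length (P : List Bool) : (elev P).length = P.length + 2 := by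
  simp [elev]

lemma pyr_length (a : ℕ) : (pyr a).length = 2 * a := by
  simp [pyr]; ring

lemma ph_sing_true (i : ℕ) (h : 1 ≤ i) : prefixHeight [true] i = 1 := by
  have := ph_replicate_true 1 i
  simp only [replicate_one] at this
  rw [this]; simp; omega

lemma ph_sing_false (i : ℕ) (h : 1 ≤ i) : prefixHeight [false] i = -1 := by
  have := ph_replicate_false 1 i
  simp only [replicate_one] at this
  rw [this]; simp; omega

lemma ph_elev (P : List Bool) (k : ℕ) (hk : k ≤ P.length) :
    prefixHeight (elev P) (k + 1) = 1 + prefixHeight P k := by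
  rw [elev_eq, ph_append, ph_append]
  rw [ph_sing_true (k+1) (by omega)]
  simp only [length_singleton, Nat.add_sub_cancel]
  have : k - P.length = 0 := by omega
  rw [this, ph_zero]
  ring

lemma ph_elev_total (P : List Bool) :
    prefixHeight (elev P) (P.length + 2) = 1 + prefixHeight P P.length + (-1) := by
  rw [elev_eq, ph_append, ph_append]
  rw [ph_sing_true _ (by omega)]
  simp only [length_singleton, Nat.add_sub_cancel]
  rw [ph_of_le (by omega)]
  have h1 : P.length + 2 - 1 - P.length = 1 := by omega
  rw [h1, ph_sing_false 1 le_rfl]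
  ring

lemma ph_pyr (a i : ℕ) :
    prefixHeight (pyr a) i = ((min i a : ℕ) : ℤ) - ((min (i - a) a : ℕ) : ℤ) := by
  rw [pyr, ph_append, ph_replicate_true, ph_replicate_false, length_replicate]
  push_cast
  ring

lemma ph_pyr_total (a : ℕ) : prefixHeight (pyr a) (2 * a) = 0 := by
  rw [ph_pyr]
  have h1 : min (2 * a) a = a := by omega
  have h2 : min (2 * a - a) a = a := by omega
  rw [h1, h2]; ring

lemma ph_pyrQ (a k : ℕ) (Q : List Bool) :
    prefixHeight (pyr a ++ Q) (2 * a + k) = prefixHeight Q k := by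
  rw [ph_append, pyr_length]
  have h1 : 2 * a ≤ 2 * a + k := by omega
  rw [ph_of_le (by rw [pyr_length]; omega), pyr_length, ph_pyr_total]
  simp

lemma ph_pyrQ_le (a i : ℕ) (Q : List Bool) (h : i ≤ 2 * a) :
    prefixHeight (pyr a ++ Q) i = prefixHeight (pyr a) i := by
  rw [ph_append, pyr_length]
  have : i - 2 * a = 0 := by omega
  rw [this, ph_zero, add_zero]

/-! ### getElem? facts -/

lemma getElem?_elev_zero (P : List Bool) : (elev P)[0]? = some true := by simp [elev]

lemma getElem?_elev_succ (P : List Bool) (k : ℕ) :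
    (elev P)[k + 1]? = (P ++ [false])[k]? := by simp [elev]

lemma getElem?_pyrQ_lt (a i : ℕ) (Q : List Bool) (h : i < a) :
    (pyr a ++ Q)[i]? = some true := by
  rw [getElem?_append_left (by rw [pyr_length]; omega)]
  rw [pyr, getElem?_append_left (by simp [h])]
  simp [getElem?_replicate, h]

lemma getElem?_pyrQ_mid (a i : ℕ) (Q : List Bool) (h1 : a ≤ i) (h2 : i < 2 * a) :
    (pyr a ++ Q)[i]? = some false := by
  rw [getElem?_append_left (by rw [pyr_length]; omega)]
  rw [pyr, getElem?_append_right (by simp [h1])]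
  simp only [length_replicate]
  simp [getElem?_replicate]
  omega

lemma getElem?_pyrQ_ge (a i : ℕ) (Q : List Bool) (h : 2 * a ≤ i) :
    (pyr a ++ Q)[i]? = Q[i - 2 * a]? := by
  rw [getElem?_append_right (by rw [pyr_length]; omega), pyr_length]

/-! ### valley transfer -/

lemma getElem?_appf_true {P : List Bool} {k : ℕ}
    (h : (P ++ [false])[k]? = some true) : k < P.length ∧ P[k]? = some true := by
  by_cases hk : k < P.length
  · rw [getElem?_append_left hk] at h; exact ⟨hk, h⟩
  · exfalso
    rw [getElem?_append_right (by omega)] at h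
    rcases Nat.eq_or_lt_of_le (Nat.le_of_not_lt hk) with h' | h'
    · rw [show k - P.length = 0 by omega] at h; simp at h
    · rw [getElem?_eq_none (by simp; omega)] at h; simp at h

lemma isValley_elev_iff (P : List Bool) (i : ℕ) :
    IsValley (elev P) i ↔ ∃ i', i = i' + 1 ∧ IsValley P i' := by
  constructor
  · rintro ⟨h1, h2⟩
    cases i with
    | zero => rw [getElem?_elev_zero] at h1; simp at h1
    | succ k =>
      rw [getElem?_elev_succ] at h1 h2
      obtain ⟨hk1, hp2⟩ := getElem?_appf_true h2
      rw [getElem?_append_left (by omega)] at h1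
      exact ⟨k, rfl, h1, hp2⟩
  · rintro ⟨i', rfl, h1, h2⟩
    have hlt : i' + 1 < P.length := by
      by_contra hc
      rw [getElem?_eq_none (by omega)] at h2; simp at h2
    constructor
    · rw [getElem?_elev_succ, getElem?_append_left (by omega)]
      exact h1
    · rw [getElem?_elev_succ, getElem?_append_left hlt]
      exact h2

lemma isValley_pyrQ_iff (a : ℕ) (ha : 1 ≤ a) (Q : List Bool) (j : ℕ) :
    IsValley (pyr a ++ Q) j ↔
      (j = 2 * a - 1 ∧ Q[0]? = some true) ∨
      (∃ j', j = 2 * a + j' ∧ IsValley Q j') := by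
  constructor
  · rintro ⟨h1, h2⟩
    rcases Nat.lt_or_ge j a with hj | hj
    · rw [getElem?_pyrQ_lt a j Q hj] at h1; simp at h1
    rcases Nat.lt_or_ge j (2 * a) with hj2 | hj2
    · rcases Nat.lt_or_ge (j + 1) (2 * a) with hj3 | hj3
      · rw [getElem?_pyrQ_mid a (j+1) Q (by omega) hj3] at h2; simp at h2
      · left
        have hje : j = 2 * a - 1 := by omega
        refine ⟨hje, ?_⟩
        rw [getElem?_pyrQ_ge a (j+1) Q (by omega)] at h2
        have : j + 1 - 2 * a = 0 := by omega
        rwa [this] at h2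
    · right
      refine ⟨j - 2 * a, by omega, ?_, ?_⟩
      · rw [getElem?_pyrQ_ge a j Q hj2] at h1; exact h1
      · rw [getElem?_pyrQ_ge a (j+1) Q (by omega)] at h2
        have : j + 1 - 2 * a = j - 2 * a + 1 := by omega
        rwa [this] at h2
  · rintro (⟨rfl, hq⟩ | ⟨j', rfl, h1, h2⟩)
    · constructor
      · exact getElem?_pyrQ_mid a _ Q (by omega) (by omega)
      · rw [show 2 * a - 1 + 1 = 2 * a + 0 by omega, getElem?_pyrQ_ge a _ Q (by omega)]
        simpa using hq
    · constructor
      · rw [getElem?_pyrQ_ge a _ Q (by omega)]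
        simpa using h1
      · rw [getElem?_pyrQ_ge a _ Q (by omega)]
        have : 2 * a + j' + 1 - 2 * a = j' + 1 := by omega
        rwa [this]

/-! ### membership lemmas -/

lemma elev_mem {P : List Bool} {n : ℕ} (h : P ∈ nondecDyck n) :
    elev P ∈ nondecDyck (n + 1) := by
  obtain ⟨hl, ⟨hpos, htot⟩, hval⟩ := h
  refine ⟨by rw [elev_length, hl]; ring, ⟨?_, ?_⟩, ?_⟩
  · intro i hi
    rw [elev_length, hl] at hi
    cases i with
    | zero => rw [ph_zero]
    | succ k =>
      rcases Nat.lt_or_ge k (2 * n + 1) with hk | hk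
      · rw [ph_elev P k (by omega)]
        have := hpos k (by omega)
        omega
      · have hk2 : k = 2 * n + 1 := by omega
        subst hk2
        have : (2 : ℕ) * n + 1 + 1 = P.length + 2 := by omega
        rw [this, ph_elev_total, htot]
        norm_num
  · rw [elev_length, ph_elev_total, htot]
    ring
  · intro i j hvi hvj hij
    obtain ⟨i', rfl, hvi'⟩ := (isValley_elev_iff P i).mp hvi
    obtain ⟨j', rfl, hvj'⟩ := (isValley_elev_iff P j).mp hvj
    have hi1 : i' + 1 < P.length := by
      by_contra hc
      have := hvi'.2
      rw [getElem?_eq_none (by omega)] at this; simp at this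
    have hj1 : j' + 1 < P.length := by
      by_contra hc
      have := hvj'.2
      rw [getElem?_eq_none (by omega)] at this; simp at this
    rw [ph_elev P (i' + 1) (by omega), ph_elev P (j' + 1) (by omega)]
    have := hval i' j' hvi' hvj' (by omega)
    omega

lemma pyrQ_mem {Q : List Bool} {m : ℕ} (a : ℕ) (ha : 1 ≤ a) (h : Q ∈ nondecDyck m) :
    pyr a ++ Q ∈ nondecDyck (a + m) := by
  obtain ⟨hl, ⟨hpos, htot⟩, hval⟩ := h
  have hlen : (pyr a ++ Q).length = 2 * (a + m) := by
    rw [length_append, pyr_length, hl]; ring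
  refine ⟨hlen, ⟨?_, ?_⟩, ?_⟩
  · intro i hi
    rcases le_or_gt i (2 * a) with hia | hia
    · rw [ph_pyrQ_le a i Q hia, ph_pyr]
      have h1 : min (i - a) a ≤ min i a := by omega
      have := Nat.cast_le (α := ℤ).mpr h1
      omega
    · have : i = 2 * a + (i - 2 * a) := by omega
      rw [this, ph_pyrQ]
      exact hpos (i - 2 * a) (by omega)
  · rw [hlen, show 2 * (a + m) = 2 * a + 2 * m by ring, ph_pyrQ, ← hl]
    exact htot
  · intro i j hvi hvj hij
    rw [isValley_pyrQ_iff a ha Q] at hvi hvj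
    rcases hvi with ⟨rfl, hq⟩ | ⟨i', rfl, hvi'⟩ <;>
      rcases hvj with ⟨hje, hq'⟩ | ⟨j', rfl, hvj'⟩
    · rw [hje]
    · rw [show 2 * a - 1 + 1 = 2 * a + 0 by omega, ph_pyrQ, ph_zero,
        show 2 * a + j' + 1 = 2 * a + (j' + 1) by omega, ph_pyrQ]
      exact hpos (j' + 1) (by
        have := hvj'.2
        by_contra hc
        rw [getElem?_eq_none (by omega)] at this; simp at this)
    · omega
    · rw [show 2 * a + i' + 1 = 2 * a + (i' + 1) by omega, ph_pyrQ,
        show 2 * a + j' + 1 = 2 * a + (j' + 1) by omega, ph_pyrQ]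
      exact hval i' j' hvi' hvj' (by omega)

lemma elev_surj {w : List Bool} {n : ℕ} (hw : w ∈ nondecDyck (n + 1))
    (hpos : ∀ i, 0 < i → i < 2 * (n + 1) → 0 < prefixHeight w i) :
    ∃ P ∈ nondecDyck n, w = elev P := by
  obtain ⟨hl, ⟨hdpos, htot⟩, hval⟩ := hw
  have hwne : w ≠ [] := by intro hc; rw [hc] at hl; simp at hl
  have hhead := first_true ⟨hdpos, htot⟩ hwne
  have hlast := last_false ⟨hdpos, htot⟩ hwne
  -- structure: w = true :: (P ++ [false])
  obtain ⟨b, t, rfl⟩ : ∃ b t, w = b :: t := by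
    cases w with
    | nil => exact absurd rfl hwne
    | cons b t => exact ⟨b, t, rfl⟩
  have hb : b = true := by simpa using hhead
  subst hb
  have htne : t ≠ [] := by
    intro hc; rw [hc] at hl; simp at hl; omega
  have htlast : t.getLast? = some false := by
    cases t with
    | nil => exact absurd rfl htne
    | cons c s => rwa [getLast?_cons_cons] at hlast
  have hgl : t.getLast htne = false := by
    have := getLast?_eq_getLast htne
    rw [this] at htlast
    simpa using htlast
  have hstruct : true :: t = elev t.dropLast := by
    rw [elev]
    congr 1
    conv_lhs => rw [← dropLast_append_getLast htne]
    rw [hgl]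
  set P := t.dropLast with hP
  have hlP : P.length = 2 * n := by
    have h1 : t.length = 2 * n + 1 := by simp at hl; omega
    simp [hP, h1]
  rw [hstruct] at hdpos htot hval hl ⊢
  have hphP : ∀ k, k ≤ 2 * n → prefixHeight P k = prefixHeight (elev P) (k + 1) - 1 := by
    intro k hk
    rw [ph_elev P k (by omega)]; ring
  refine ⟨P, ⟨hlP, ⟨?_, ?_⟩, ?_⟩, rfl⟩
  · intro k hk
    rw [hlP] at hk
    rw [hphP k hk]
    have := hpos (k + 1) (by omega) (by omega)
    rw [hstruct] at this
    omega
  · rw [hlP, hphP (2 * n) le_rfl]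
    have h1 : 0 < prefixHeight (elev P) (2 * n + 1) := by
      have := hpos (2 * n + 1) (by omega) (by omega)
      rwa [hstruct] at this
    have h2 : prefixHeight (elev P) (2 * n + 2) = 0 := by
      have := htot
      rw [elev_length, hlP] at this
      exact this
    have h3 : 2 * n + 1 < (elev P).length := by rw [elev_length, hlP]; omega
    have h4 := ph_succ h3
    rw [h2] at h4
    split at h4 <;> omega
  · intro i j hvi hvj hij
    have hwvi : IsValley (elev P) (i + 1) := (isValley_elev_iff P (i + 1)).mpr ⟨i, rfl, hvi⟩
    have hwvj : IsValley (elev P) (j + 1) := (isValley_elev_iff P (j + 1)).mpr ⟨j, rfl, hvj⟩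
    have hi1 : i + 1 < P.length := by
      by_contra hc
      have := hvi.2
      rw [getElem?_eq_none (by omega)] at this; simp at this
    have hj1 : j + 1 < P.length := by
      by_contra hc
      have := hvj.2
      rw [getElem?_eq_none (by omega)] at this; simp at this
    rw [hphP (i + 1) (by omega), hphP (j + 1) (by omega)]
    have := hval (i + 1) (j + 1) hwvi hwvj (by omega)
    omega

lemma pyr_surj {w : List Bool} {n : ℕ} (hw : w ∈ nondecDyck (n + 1))
    {i₀ : ℕ} (hi₀ : 0 < i₀) (hi₀' : i₀ < 2 * (n + 1)) (hz : prefixHeight w i₀ = 0) :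
    ∃ a ∈ Finset.Icc 1 n, ∃ Q ∈ nondecDyck (n + 1 - a), w = pyr a ++ Q := by
  classical
  obtain ⟨hl, ⟨hdpos, htot⟩, hval⟩ := hw
  have hex : ∃ i, 0 < i ∧ prefixHeight w i = 0 := ⟨i₀, hi₀, hz⟩
  set m := Nat.find hex with hm
  obtain ⟨hm0, hmz⟩ : 0 < m ∧ prefixHeight w m = 0 := Nat.find_spec hex
  have hmin : ∀ k, k < m → 0 < k → prefixHeight w k ≠ 0 := by
    intro k hk hk0 hc
    exact Nat.find_min hex hk ⟨hk0, hc⟩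
  have hmle : m ≤ i₀ := Nat.find_min' hex ⟨hi₀, hz⟩
  have hmlt : m < 2 * (n + 1) := by omega
  have hm2 : 2 ≤ m := by
    by_contra hc
    have hm1 : m = 1 := by omega
    have h01 : (0:ℕ) < w.length := by rw [hl]; omega
    have := ph_succ h01
    rw [ph_zero, zero_add, ← hm1] at this
    rw [this] at hmz
    split at hmz <;> omega
  -- heights just before m
  have hphm1 : 1 ≤ prefixHeight w (m - 1) := by
    have h1 := hdpos (m - 1) (by omega)
    have h2 := hmin (m - 1) (by omega) (by omega)
    omega
  have hwm1 : w[m - 1]? = some false := by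
    have hlt : m - 1 < w.length := by omega
    have h1 := ph_succ hlt
    rw [show m - 1 + 1 = m by omega, hmz] at h1
    rw [getElem?_eq_getElem hlt]
    split at h1
    · omega
    · next hc => simp at hc; rw [hc]
  have hwm : w[m]? = some true := by
    have hlt : m < w.length := by omega
    have h1 := ph_succ hlt
    rw [hmz, zero_add] at h1
    have h2 := hdpos (m + 1) (by omega)
    rw [getElem?_eq_getElem hlt]
    split at h1
    · next hc => rw [hc]
    · omega
  have hvm : IsValley w (m - 1) := ⟨hwm1, by rw [show m - 1 + 1 = m by omega]; exact hwm⟩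
  -- take m w is a pyramid
  set x := w.take m with hx
  have hlx : x.length = m := by rw [hx, length_take]; omega
  have hxDU : ∀ i, ¬(x[i]? = some false ∧ x[i + 1]? = some true) := by
    rintro i ⟨h1, h2⟩
    have hi1 : i + 1 < m := by
      by_contra hc
      rw [getElem?_eq_none (by omega)] at h2; simp at h2
    have hw1 : w[i]? = some false := by
      rw [hx, List.getElem?_take] at h1
      rwa [if_pos (show i < m by omega)] at h1
    have hw2 : w[i + 1]? = some true := by
      rw [hx, List.getElem?_take] at h2
      rwa [if_pos (show i + 1 < m by omega)] at h2
    have hvw : IsValley w i := ⟨hw1, hw2⟩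
    have := hval i (m - 1) hvw hvm (by omega)
    rw [show m - 1 + 1 = m by omega, hmz] at this
    have h3 := hdpos (i + 1) (by omega)
    have h4 := hmin (i + 1) (by omega) (by omega)
    omega
  have hxs := noDU_structure x hxDU
  have hphx : prefixHeight x m = 0 := by
    rw [hx, ph_take, min_self]; exact hmz
  have hcnt : x.count true = x.count false := by
    have hxx : x.take m = x := by rw [← hlx]; exact take_of_length_le le_rfl
    rw [prefixHeight, hxx] at hphx
    omega
  have hsum := count_true_add_count_false x
  set c := x.count true with hc
  have hm2c : m = 2 * c := by omega
  have hxpyr : x = pyr c := by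
    rw [hxs, ← hcnt]; rfl
  have hc1 : 1 ≤ c := by omega
  have hcn : c ≤ n := by omega
  set Q := w.drop m with hQ
  have hwxQ : w = pyr c ++ Q := by
    rw [← hxpyr, hx, hQ, take_append_drop]
  have hlQ : Q.length = 2 * (n + 1 - c) := by
    rw [hQ, length_drop, hl]; omega
  have hphQ : ∀ k, prefixHeight Q k = prefixHeight w (2 * c + k) := by
    intro k
    conv_rhs => rw [hwxQ]
    rw [ph_pyrQ]
  refine ⟨c, Finset.mem_Icc.mpr ⟨hc1, hcn⟩, Q, ⟨hlQ, ⟨?_, ?_⟩, ?_⟩, hwxQ⟩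
  · intro k hk
    rw [hphQ k]
    exact hdpos (2 * c + k) (by rw [hlQ] at hk; omega)
  · rw [hlQ, hphQ]
    rw [show 2 * c + 2 * (n + 1 - c) = 2 * (n + 1) by omega, ← hl]
    exact htot
  · intro i j hvi hvj hij
    have hwvi : IsValley w (2 * c + i) := by
      rw [hwxQ, isValley_pyrQ_iff c hc1 Q]
      exact Or.inr ⟨i, rfl, hvi⟩
    have hwvj : IsValley w (2 * c + j) := by
      rw [hwxQ, isValley_pyrQ_iff c hc1 Q]
      exact Or.inr ⟨j, rfl, hvj⟩
    have := hval (2 * c + i) (2 * c + j) hwvi hwvj (by omega)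
    rw [show 2 * c + i + 1 = 2 * c + (i + 1) by omega,
      show 2 * c + j + 1 = 2 * c + (j + 1) by omega] at this
    rw [hphQ (i + 1), hphQ (j + 1)]
    exact this

/-- the first-return decomposition of nondecreasing Dyck words -/
lemma mem_decomp (n : ℕ) (w : List Bool) :
    w ∈ nondecDyck (n + 1) ↔
      (∃ P ∈ nondecDyck n, w = elev P) ∨
      (∃ a ∈ Finset.Icc 1 n, ∃ Q ∈ nondecDyck (n + 1 - a), w = pyr a ++ Q) := by
  constructor
  · intro hw
    by_cases hz : ∃ i, 0 < i ∧ i < 2 * (n + 1) ∧ prefixHeight w i = 0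
    · obtain ⟨i₀, h1, h2, h3⟩ := hz
      exact Or.inr (pyr_surj hw h1 h2 h3)
    · push_neg at hz
      refine Or.inl (elev_surj hw ?_)
      intro i h1 h2
      have h3 := hw.2.1.1 i (by rw [hw.1]; omega)
      have h4 := hz i h1 h2
      omega
  · rintro (⟨P, hP, rfl⟩ | ⟨a, ha, Q, hQ, rfl⟩)
    · exact elev_mem hP
    · have ha' := Finset.mem_Icc.mp ha
      have := pyrQ_mem a ha'.1 hQ
      rwa [show a + (n + 1 - a) = n + 1 by omega] at this

/-! ### finset versions and counting -/

lemma nd_finite (m : ℕ) : (nondecDyck m).Finite :=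
  (List.finite_length_eq Bool (2 * m)).subset fun _ hw => hw.1

noncomputable def NDF (m : ℕ) : Finset (List Bool) := (nd_finite m).toFinset

lemma mem_NDF {w : List Bool} {m : ℕ} : w ∈ NDF m ↔ w ∈ nondecDyck m :=
  Set.Finite.mem_toFinset _

lemma numNondecDyck_eq (m : ℕ) : numNondecDyck m = (NDF m).card := by
  rw [numNondecDyck, Set.ncard_eq_toFinset_card _ (nd_finite m)]; rfl

lemma totalPeaks_eq (m : ℕ) : totalPeaks m = ∑ w ∈ NDF m, numPeaks w := by
  rw [totalPeaks, ← finsum_mem_coe_finset]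
  simp only [NDF]
  rw [(nd_finite m).coe_toFinset]

lemma ph_elev_pos {P : List Bool} {n : ℕ} (hP : P ∈ nondecDyck n) :
    ∀ i, 0 < i → i < 2 * (n + 1) → 0 < prefixHeight (elev P) i := by
  intro i h1 h2
  obtain ⟨k, rfl⟩ : ∃ k, i = k + 1 := ⟨i - 1, by omega⟩
  rw [ph_elev P k (by rw [hP.1]; omega)]
  have := hP.2.1.1 k (by rw [hP.1]; omega)
  omega

lemma ph_pyrQ_2a (a : ℕ) (Q : List Bool) : prefixHeight (pyr a ++ Q) (2 * a) = 0 := by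
  have := ph_pyrQ a 0 Q
  rw [Nat.add_zero] at this
  rw [this, ph_zero]

lemma elev_inj : Function.Injective elev := by
  intro P P' h
  rw [elev, elev] at h
  simp only [List.cons.injEq, true_and] at h
  exact append_cancel_right h

lemma pyrQ_inj (a : ℕ) : Function.Injective (fun Q => pyr a ++ Q) :=
  fun _ _ h => append_cancel_left h

lemma pyr_ne {a b : ℕ} (hab : a < b) (ha : 1 ≤ a) (Q Q' : List Bool) :
    pyr a ++ Q ≠ pyr b ++ Q' := by
  intro h
  have h1 : (pyr a ++ Q)[a]? = some false :=
    getElem?_pyrQ_mid a a Q le_rfl (by omega)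
  have h2 : (pyr b ++ Q')[a]? = some true := getElem?_pyrQ_lt b a Q' hab
  rw [h, h2] at h1
  simp at h1

lemma nd_head {w : List Bool} {m : ℕ} (h : w ∈ nondecDyck m) (hm : 1 ≤ m) :
    w[0]? = some true :=
  first_true h.2.1 (by intro hc; have := h.1; rw [hc] at this; simp at this; omega)

lemma nd_last {w : List Bool} {m : ℕ} (h : w ∈ nondecDyck m) (hm : 1 ≤ m) :
    w.getLast? = some false :=
  last_false h.2.1 (by intro hc; have := h.1; rw [hc] at this; simp at this; omega)

lemma numPeaks_elev {P : List Bool} {n : ℕ} (hP : P ∈ nondecDyck n) (hn : 1 ≤ n) :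
    numPeaks (elev P) = numPeaks P := by
  have hh := nd_head hP hn
  have hl := nd_last hP hn
  have hPne : P ≠ [] := by
    intro hc; have := hP.1; rw [hc] at this; simp at this; omega
  rw [numPeaks_eq_peaksAux, numPeaks_eq_peaksAux, elev]
  show peaksAux (P ++ [false]) + _ = _
  rw [peaksAux_append_singleton_false P hl]
  have h0 : (P ++ [false])[0]? = some true := by
    rw [getElem?_append_left (by rw [length_pos_iff]; exact hPne)]
    exact hh
  rw [h0]
  simp

lemma numPeaks_pyrQ (a : ℕ) (ha : 1 ≤ a) (Q : List Bool) :
    numPeaks (pyr a ++ Q) = 1 + numPeaks Q := by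
  rw [numPeaks_eq_peaksAux, numPeaks_eq_peaksAux, pyr, append_assoc,
    peaksAux_replicate_true_append, peaksAux_replicate_false_append]
  have h0 : (replicate a false ++ Q)[0]? = some false := by
    rw [getElem?_append_left (by simp; omega)]
    simp [getElem?_replicate]; omega
  rw [h0]
  simp [ha]
  omega

lemma NDF_decomp (n : ℕ) :
    NDF (n + 1) = (NDF n).image elev ∪
      (Finset.Icc 1 n).biUnion (fun a => (NDF (n + 1 - a)).image (fun Q => pyr a ++ Q)) := by
  ext w
  simp only [Finset.mem_union, Finset.mem_image, Finset.mem_biUnion, mem_NDF]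
  rw [mem_decomp]
  constructor
  · rintro (⟨P, hP, rfl⟩ | ⟨a, ha, Q, hQ, rfl⟩)
    · exact Or.inl ⟨P, hP, rfl⟩
    · exact Or.inr ⟨a, ha, Q, hQ, rfl⟩
  · rintro (⟨P, hP, rfl⟩ | ⟨a, ha, Q, hQ, rfl⟩)
    · exact Or.inl ⟨P, hP, rfl⟩
    · exact Or.inr ⟨a, ha, Q, hQ, rfl⟩

lemma decomp_disj (n : ℕ) :
    Disjoint ((NDF n).image elev)
      ((Finset.Icc 1 n).biUnion (fun a => (NDF (n + 1 - a)).image (fun Q => pyr a ++ Q))) := by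
  rw [Finset.disjoint_left]
  rintro w hw1 hw2
  simp only [Finset.mem_image, mem_NDF] at hw1
  simp only [Finset.mem_biUnion, Finset.mem_image, mem_NDF] at hw2
  obtain ⟨P, hP, rfl⟩ := hw1
  obtain ⟨a, ha, Q, hQ, hEq⟩ := hw2
  rw [Finset.mem_Icc] at ha
  have h1 := ph_elev_pos hP (2 * a) (by omega) (by omega)
  rw [← hEq, ph_pyrQ_2a] at h1
  omega

lemma decomp_pairwise (n : ℕ) :
    ∀ x ∈ Finset.Icc 1 n, ∀ y ∈ Finset.Icc 1 n, x ≠ y →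
      Disjoint ((NDF (n + 1 - x)).image (fun Q => pyr x ++ Q))
        ((NDF (n + 1 - y)).image (fun Q => pyr y ++ Q)) := by
  intro x hx y hy hxy
  rw [Finset.mem_Icc] at hx hy
  rw [Finset.disjoint_left]
  rintro w hw1 hw2
  simp only [Finset.mem_image, mem_NDF] at hw1 hw2
  obtain ⟨Q, _, rfl⟩ := hw1
  obtain ⟨Q', _, hEq⟩ := hw2
  rcases Nat.lt_or_ge x y with h | h
  · exact pyr_ne h hx.1 Q Q' hEq.symm
  · exact pyr_ne (by omega) hy.1 Q' Q hEq

lemma sum_Icc_reflect (f : ℕ → ℕ) (n : ℕ) :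
    ∑ a ∈ Finset.Icc 1 n, f (n + 1 - a) = ∑ m ∈ Finset.Icc 1 n, f m := by
  apply Finset.sum_bij' (fun a _ => n + 1 - a) (fun m _ => n + 1 - m)
  · intro a ha; rw [Finset.mem_Icc] at *; omega
  · intro a ha; rw [Finset.mem_Icc] at *; omega
  · intro a ha; rw [Finset.mem_Icc] at ha; omega
  · intro a ha; rw [Finset.mem_Icc] at ha; omega
  · intro a _; rfl

lemma dd_rec (n : ℕ) :
    numNondecDyck (n + 1) = numNondecDyck n + ∑ m ∈ Finset.Icc 1 n, numNondecDyck m := by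
  classical
  rw [numNondecDyck_eq, NDF_decomp, Finset.card_union_of_disjoint (decomp_disj n),
    Finset.card_image_of_injective _ elev_inj,
    Finset.card_biUnion (decomp_pairwise n)]
  congr 1
  · exact (numNondecDyck_eq n).symm
  · rw [← sum_Icc_reflect (fun m => numNondecDyck m) n]
    apply Finset.sum_congr rfl
    intro a _
    rw [Finset.card_image_of_injective _ (pyrQ_inj a), numNondecDyck_eq]

lemma pp_rec (n : ℕ) (hn : 1 ≤ n) :
    totalPeaks (n + 1) =
      totalPeaks n + ∑ m ∈ Finset.Icc 1 n, (numNondecDyck m + totalPeaks m) := by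
  classical
  rw [totalPeaks_eq, NDF_decomp, Finset.sum_union (decomp_disj n),
    Finset.sum_biUnion]
  · congr 1
    · rw [Finset.sum_image (fun x _ y _ h => elev_inj h)]
      rw [totalPeaks_eq]
      apply Finset.sum_congr rfl
      intro P hP
      exact numPeaks_elev (mem_NDF.mp hP) hn
    · rw [← sum_Icc_reflect (fun m => numNondecDyck m + totalPeaks m) n]
      apply Finset.sum_congr rfl
      intro a ha
      rw [Finset.mem_Icc] at ha
      rw [Finset.sum_image (fun x _ y _ h => pyrQ_inj a h)]
      have : ∀ Q ∈ NDF (n + 1 - a), numPeaks (pyr a ++ Q) = 1 + numPeaks Q := by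
        intro Q _
        exact numPeaks_pyrQ a ha.1 Q
      rw [Finset.sum_congr rfl this, Finset.sum_add_distrib]
      simp [numNondecDyck_eq, totalPeaks_eq]
  · intro x hx y hy hxy
    exact decomp_pairwise n x hx y hy hxy

/-! ### base cases -/

lemma nondecDyck_one : nondecDyck 1 = {[true, false]} := by
  ext w
  constructor
  · intro hw
    have hl : w.length = 2 := hw.1
    have hh := nd_head hw le_rfl
    have hlast := nd_last hw le_rfl
    match w, hl with
    | [a, b], _ =>
      simp only [getElem?_cons_zero, Option.some.injEq] at hh
      rw [getLast?_cons_cons, getLast?_singleton, Option.some.injEq] at hlast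
      rw [hh, hlast]
      rfl
  · rintro rfl
    refine ⟨rfl, ⟨?_, ?_⟩, ?_⟩
    · intro i hi
      simp only [length_cons, length_nil] at hi
      interval_cases i <;> decide
    · decide
    · rintro i j ⟨h1, h2⟩ _ _
      exfalso
      match i with
      | 0 => simp at h1
      | 1 => simp at h2
      | (k+2) => simp at h1

lemma dd_one : numNondecDyck 1 = 1 := by
  rw [numNondecDyck, nondecDyck_one, Set.ncard_singleton]

lemma pp_one : totalPeaks 1 = 1 := by
  rw [totalPeaks, nondecDyck_one, finsum_mem_singleton]
  decide

/-! ### closed forms -/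

noncomputable def DD (n : ℕ) : ℕ := ∑ m ∈ Finset.Icc 1 n, numNondecDyck m
noncomputable def PP (n : ℕ) : ℕ := ∑ m ∈ Finset.Icc 1 n, totalPeaks m

lemma dd_rec' (n : ℕ) : numNondecDyck (n + 1) = numNondecDyck n + DD n := dd_rec n

lemma pp_rec' (n : ℕ) (hn : 1 ≤ n) : totalPeaks (n + 1) = totalPeaks n + (DD n + PP n) := by
  rw [pp_rec n hn, Finset.sum_add_distrib, DD, PP]

lemma DD_succ (n : ℕ) : DD (n + 1) = DD n + numNondecDyck (n + 1) :=
  Finset.sum_Icc_succ_top (by omega) _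

lemma PP_succ (n : ℕ) : PP (n + 1) = PP n + totalPeaks (n + 1) :=
  Finset.sum_Icc_succ_top (by omega) _

lemma closed (m : ℕ) :
    numNondecDyck (m + 1) = Nat.fib (2 * m + 1) ∧
    DD (m + 1) = Nat.fib (2 * m + 2) ∧
    5 * totalPeaks (m + 1) + (m + 1) * Nat.fib (2 * m + 1) + Nat.fib (2 * m + 2)
      = 2 * (m + 1) * Nat.fib (2 * m + 2) + 5 * Nat.fib (2 * m + 1) ∧
    5 * PP (m + 1) + (m + 1) * Nat.fib (2 * m + 2)
      = 2 * Nat.fib (2 * m + 2) + 2 * (m + 1) * Nat.fib (2 * m + 3) := by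
  induction m with
  | zero =>
    have hDD1 : DD 1 = 1 := by
      rw [DD, Finset.Icc_self, Finset.sum_singleton, dd_one]
    have hPP1 : PP 1 = 1 := by
      rw [PP, Finset.Icc_self, Finset.sum_singleton, pp_one]
    have hf3 : Nat.fib 3 = 2 := rfl
    refine ⟨?_, ?_, ?_, ?_⟩
    · norm_num [dd_one, Nat.fib_one]
    · norm_num [hDD1, Nat.fib_two]
    · norm_num [pp_one, Nat.fib_one, Nat.fib_two]
    · norm_num [hPP1, Nat.fib_two, hf3]
  | succ m ih =>
    obtain ⟨h1, h2, h3, h4⟩ := ih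
    set A := Nat.fib (2 * m + 1) with hA
    set B := Nat.fib (2 * m + 2) with hB
    have f3 : Nat.fib (2 * m + 3) = A + B := by
      rw [hA, hB, show 2 * m + 3 = (2 * m + 1) + 2 by ring, Nat.fib_add_two]
    have f4 : Nat.fib (2 * m + 4) = A + 2 * B := by
      rw [show 2 * m + 4 = (2 * m + 2) + 2 by ring, Nat.fib_add_two, f3, hB]
      ring
    have f5 : Nat.fib (2 * m + 5) = 2 * A + 3 * B := by
      rw [show 2 * m + 5 = (2 * m + 3) + 2 by ring, Nat.fib_add_two, f3, f4]
      ring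
    have e1 : 2 * (m + 1) + 1 = 2 * m + 3 := by ring
    have e2 : 2 * (m + 1) + 2 = 2 * m + 4 := by ring
    have e3 : 2 * (m + 1) + 3 = 2 * m + 5 := by ring
    have g1 : numNondecDyck (m + 1 + 1) = Nat.fib (2 * (m + 1) + 1) := by
      rw [dd_rec', h1, h2, e1, f3]
    have g2 : DD (m + 1 + 1) = Nat.fib (2 * (m + 1) + 2) := by
      rw [DD_succ, g1, h2, e1, e2, f3, f4]
      ring
    refine ⟨g1, g2, ?_, ?_⟩
    · rw [pp_rec' (m + 1) (by omega), e1, e2, f3, f4, h2]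
      rw [f3] at h4
      zify
      zify at h3 h4
      linear_combination h3 + h4
    · rw [PP_succ, pp_rec' (m + 1) (by omega), e2, e3, f4, f5, h2]
      rw [f3] at h4
      zify
      zify at h3 h4
      linear_combination h3 + 2 * h4

/-! ### the limit -/

open Filter Real

lemma abs_goldenConj_lt_one : |goldenConj| < 1 :=
  abs_lt.mpr ⟨neg_one_lt_goldenConj, by linarith [goldenConj_neg]⟩

lemma fib_ratio_tendsto :
    Tendsto (fun k : ℕ => (Nat.fib (k + 1) : ℝ) / (Nat.fib k : ℝ)) atTop
      (nhds goldenRatio) := by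
  have h0 : Tendsto
      (fun k : ℕ => (Nat.fib (k + 1) : ℝ) / (Nat.fib k : ℝ) - goldenRatio) atTop (nhds 0) := by
    apply squeeze_zero_norm' (a := fun k : ℕ => |goldenConj| ^ k)
    · filter_upwards [eventually_ge_atTop 1] with k hk
      have hfib1 : (1 : ℝ) ≤ (Nat.fib k : ℝ) := by
        exact_mod_cast Nat.succ_le_of_lt (Nat.fib_pos.mpr (by omega))
      have hfibpos : (0 : ℝ) < (Nat.fib k : ℝ) := by linarith
      have hkey := fib_succ_sub_goldenRatio_mul_fib k
      have heq : (Nat.fib (k + 1) : ℝ) / (Nat.fib k : ℝ) - goldenRatio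
          = goldenConj ^ k / (Nat.fib k : ℝ) := by
        rw [eq_div_iff (ne_of_gt hfibpos), sub_mul,
          div_mul_cancel₀ _ (ne_of_gt hfibpos)]
        linarith [hkey]
      rw [heq, Real.norm_eq_abs, abs_div, abs_pow, abs_of_pos hfibpos]
      exact div_le_self (pow_nonneg (abs_nonneg _) k) hfib1
    · exact tendsto_pow_atTop_nhds_zero_of_abs_lt_one
        (by rw [abs_abs]; exact abs_goldenConj_lt_one)
  have := h0.add_const goldenRatio
  simpa using this

lemma two_gold_sub_one : 2 * goldenRatio - 1 = Real.sqrt 5 := by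
  have h1 := goldenRatio_add_goldenConj
  have h2 := goldenRatio_sub_goldenConj
  linarith

lemma sqrt5_pos : (0 : ℝ) < Real.sqrt 5 := Real.sqrt_pos.mpr (by norm_num)

theorem avg_leaves_aux :
    Tendsto
      (fun n : ℕ => (totalPeaks n : ℝ) / ((n : ℝ) * (numNondecDyck n : ℝ)))
      atTop (nhds (1 / Real.sqrt 5)) := by
  rw [show (1 : ℝ) / Real.sqrt 5 = (2 * goldenRatio - 1) / 5 by
    rw [two_gold_sub_one]
    have h55 : Real.sqrt 5 * Real.sqrt 5 = 5 := Real.mul_self_sqrt (by norm_num)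
    rw [div_eq_div_iff sqrt5_pos.ne' (by norm_num : (5:ℝ) ≠ 0)]
    nlinarith [h55]]
  apply (tendsto_add_atTop_iff_nat 1).mp
  set u : ℕ → ℝ := fun m => 1 / ((m : ℝ) + 1) with hu_def
  set r : ℕ → ℝ := fun m => (Nat.fib (2 * m + 1 + 1) : ℝ) / (Nat.fib (2 * m + 1) : ℝ)
    with hr_def
  have hu : Tendsto u atTop (nhds 0) := tendsto_one_div_add_atTop_nhds_zero_nat
  have h2m : Tendsto (fun m : ℕ => 2 * m + 1) atTop atTop :=
    tendsto_atTop_mono (fun n => (by simp only [id_eq]; omega : id n ≤ 2 * n + 1)) tendsto_id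
  have hr : Tendsto r atTop (nhds goldenRatio) := fib_ratio_tendsto.comp h2m
  have hlim : Tendsto (fun m : ℕ => ((2 - u m) * r m + (5 * u m - 1)) / 5) atTop
      (nhds ((2 * goldenRatio - 1) / 5)) := by
    have t1 : Tendsto (fun m : ℕ => 2 - u m) atTop (nhds 2) := by
      simpa using tendsto_const_nhds.sub hu
    have t2 := t1.mul hr
    have t3 := hu.const_mul (5 : ℝ)
    have t4 := ((t2.add t3).sub_const 1).div_const 5
    have hfe : (fun m : ℕ => ((2 - u m) * r m + (5 * u m - 1)) / 5)
        = fun m => ((2 - u m) * r m + 5 * u m - 1) / 5 := by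
      funext m; ring
    rw [hfe, show (2 * goldenRatio - 1) / 5 = (2 * goldenRatio + 5 * 0 - 1) / 5 by norm_num]
    exact t4
  apply Tendsto.congr _ hlim
  intro m
  have h1 := (closed m).1
  have h3 := (closed m).2.2.1
  set A : ℕ := Nat.fib (2 * m + 1) with hA
  have hB : Nat.fib (2 * m + 1 + 1) = Nat.fib (2 * m + 2) := by norm_num
  set B : ℕ := Nat.fib (2 * m + 2) with hBdef
  have hA0 : (0 : ℝ) < (A : ℝ) := by
    exact_mod_cast Nat.fib_pos.mpr (by omega)
  have hppR : (totalPeaks (m + 1) : ℝ) * 5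
      = (2 * (m : ℝ) + 1) * (B : ℝ) + (4 - (m : ℝ)) * (A : ℝ) := by
    have hc := congrArg (Nat.cast : ℕ → ℝ) h3
    push_cast at hc
    linarith
  have hm1 : ((m : ℝ) + 1) ≠ 0 := by positivity
  show ((2 - u m) * r m + (5 * u m - 1)) / 5
      = (totalPeaks (m + 1) : ℝ) / (((m + 1 : ℕ) : ℝ) * (numNondecDyck (m + 1) : ℝ))
  have hpp' : (totalPeaks (m + 1) : ℝ)
      = ((2 * (m : ℝ) + 1) * (B : ℝ) + (4 - (m : ℝ)) * (A : ℝ)) / 5 := by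
    linarith
  rw [h1, hpp']
  simp only [hu_def, hr_def]
  rw [show 2 * m + 1 + 1 = 2 * m + 2 from by ring]
  rw [← hA, ← hBdef]
  have hA0' : (A : ℝ) ≠ 0 := ne_of_gt hA0
  push_cast
  field_simp
  ring

end NDD

/-- `p(n)/(n·d(n)) → 1/√5` as `n → ∞`: the average number of leaves of a
random Elena tree with `n` nodes is asymptotic to `n/√5`. -/
theorem avg_leaves :
    Filter.Tendsto
      (fun n : ℕ => (totalPeaks n : ℝ) / ((n : ℝ) * (numNondecDyck n : ℝ)))
      Filter.atTop (nhds (1 / Real.sqrt 5)) :=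
  NDD.avg_leaves_aux
end

section
/- Let c(n) be the coefficient of X^n in the formal power series X³(1 − X)/(1 − 3X + X²)² over ℝ, and let α = (1 + √5)/2. Then c(n)/(n·α^{2n}) converges, as n → ∞, to (√5 − 2)/5. (The series X³(1 − X)/(1 − 3X + X²)² is the generating function, by size, of the total number of paths over all Elena trees; hence the average number of paths in a random Elena tree with n nodes is asymptotic to n/√5.) -/
open PowerSeries Filter



noncomputable def hh (n : ℕ) : ℝ :=
  ((Real.sqrt 5 - 2) / 5 * ((n : ℝ) + 1) + (9/10 - 23 * Real.sqrt 5 / 50)) * ((3 + Real.sqrt 5)/2) ^ n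
  + ((-2 - Real.sqrt 5) / 5 * ((n : ℝ) + 1) + (9/10 + 23 * Real.sqrt 5 / 50)) * ((3 - Real.sqrt 5)/2) ^ n

lemma coeff_helper (f : PowerSeries ℝ) (n : ℕ) :
    PowerSeries.coeff n (f * ((1 : PowerSeries ℝ) - 3 * PowerSeries.X + PowerSeries.X ^ 2) ^ 2) =
      PowerSeries.coeff n f
      - 6 * (if 1 ≤ n then PowerSeries.coeff (n - 1) f else 0)
      + 11 * (if 2 ≤ n then PowerSeries.coeff (n - 2) f else 0)
      - 6 * (if 3 ≤ n then PowerSeries.coeff (n - 3) f else 0)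
      + (if 4 ≤ n then PowerSeries.coeff (n - 4) f else 0) := by
  have h6 : (PowerSeries.C (R := ℝ)) 6 = 6 := map_ofNat _ 6
  have h11 : (PowerSeries.C (R := ℝ)) 11 = 11 := map_ofNat _ 11
  have e : f * ((1 : PowerSeries ℝ) - 3 * PowerSeries.X + PowerSeries.X ^ 2) ^ 2 =
      f - (PowerSeries.C (R := ℝ) 6) * (f * PowerSeries.X ^ 1)
        + (PowerSeries.C (R := ℝ) 11) * (f * PowerSeries.X ^ 2)
        - (PowerSeries.C (R := ℝ) 6) * (f * PowerSeries.X ^ 3)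
        + f * PowerSeries.X ^ 4 := by
    rw [h6, h11]; ring
  have cm1 : PowerSeries.coeff n (f * PowerSeries.X) =
      (if 1 ≤ n then PowerSeries.coeff (n - 1) f else 0) := by
    rw [show (PowerSeries.X : PowerSeries ℝ) = PowerSeries.X ^ 1 by rw [pow_one]]
    exact PowerSeries.coeff_mul_X_pow' f 1 n
  rw [e]
  simp [PowerSeries.coeff_mul_X_pow', cm1, mul_ite, mul_zero]

lemma rec_gen (P Q r : ℝ) (hr : r ^ 2 - 3 * r + 1 = 0) (m : ℕ) :
    (P * ((m : ℝ) + 6) + Q) * r ^ (m + 5) - 6 * ((P * ((m : ℝ) + 5) + Q)) * r ^ (m + 4)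
      + 11 * (P * ((m : ℝ) + 4) + Q) * r ^ (m + 3) - 6 * (P * ((m : ℝ) + 3) + Q) * r ^ (m + 2)
      + (P * ((m : ℝ) + 2) + Q) * r ^ (m + 1) = 0 := by
  linear_combination (r ^ (m + 1) *
    ((P * ((m : ℝ) + 2) + Q) * (r ^ 2 - 3 * r + 1) + 2 * P * r * (2 * r - 3))) * hr



lemma hs5 : Real.sqrt 5 ^ 2 = 5 := Real.sq_sqrt (by norm_num)

lemma key : (PowerSeries.mk hh - 1) * ((1 : PowerSeries ℝ) - 3 * PowerSeries.X + PowerSeries.X ^ 2) ^ 2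
    = PowerSeries.X ^ 3 - PowerSeries.X ^ 4 := by
  have hs := hs5
  have ha : ((3 + Real.sqrt 5)/2) ^ 2 - 3 * ((3 + Real.sqrt 5)/2) + 1 = 0 := by
    linear_combination hs / 4
  have hb : ((3 - Real.sqrt 5)/2) ^ 2 - 3 * ((3 - Real.sqrt 5)/2) + 1 = 0 := by
    linear_combination hs / 4
  ext n
  rw [coeff_helper]
  simp only [map_sub, PowerSeries.coeff_mk, PowerSeries.coeff_one, PowerSeries.coeff_X_pow]
  match n with
  | 0 => norm_num [hh]; linear_combination (0:ℝ) * hs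
  | 1 => norm_num [hh]; linear_combination (-3/50 : ℝ) * hs
  | 2 => norm_num [hh]; linear_combination (63/100 : ℝ) * hs
  | 3 => norm_num [hh]; linear_combination ((-227/200 : ℝ) + (17/200) * Real.sqrt 5 ^ 2) * hs
  | 4 => norm_num [hh]; linear_combination ((-5/16 : ℝ) + (13/80) * Real.sqrt 5 ^ 2) * hs
  | (m+5) =>
    have c1 : (1:ℕ) ≤ m + 5 := by omega
    have c2 : (2:ℕ) ≤ m + 5 := by omega
    have c3 : (3:ℕ) ≤ m + 5 := by omega
    have c4 : (4:ℕ) ≤ m + 5 := by omega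
    rw [show m + 5 - 1 = m + 4 from rfl, show m + 5 - 2 = m + 3 from rfl,
      show m + 5 - 3 = m + 2 from rfl, show m + 5 - 4 = m + 1 from rfl,
      if_pos c1, if_pos c2, if_pos c3, if_pos c4,
      if_neg (by omega : ¬ (m+5 = 0)), if_neg (by omega : ¬ (m+4 = 0)),
      if_neg (by omega : ¬ (m+3 = 0)), if_neg (by omega : ¬ (m+2 = 0)),
      if_neg (by omega : ¬ (m+1 = 0)),
      if_neg (by omega : ¬ (m+5 = 3)), if_neg (by omega : ¬ (m+5 = 4))]
    have ea := rec_gen ((Real.sqrt 5 - 2) / 5) (9/10 - 23 * Real.sqrt 5 / 50) _ ha m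
    have eb := rec_gen ((-2 - Real.sqrt 5) / 5) (9/10 + 23 * Real.sqrt 5 / 50) _ hb m
    simp only [hh]
    push_cast
    linear_combination ea + eb


lemma series_eq :
    PowerSeries.X ^ 3 * (1 - PowerSeries.X) *
      (((1 : PowerSeries ℝ) - 3 * PowerSeries.X + PowerSeries.X ^ 2)⁻¹) ^ 2
    = PowerSeries.mk hh - 1 := by
  set Q : PowerSeries ℝ := (1 : PowerSeries ℝ) - 3 * PowerSeries.X + PowerSeries.X ^ 2 with hQ
  have hc : PowerSeries.constantCoeff Q = 1 := by
    simp [hQ]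
  have hne : PowerSeries.constantCoeff Q ≠ 0 := by rw [hc]; norm_num
  have hu : Q * Q⁻¹ = 1 := PowerSeries.mul_inv_cancel Q hne
  have h1 : PowerSeries.X ^ 3 * (1 - PowerSeries.X) = (PowerSeries.X : PowerSeries ℝ) ^ 3 - PowerSeries.X ^ 4 := by
    ring
  calc PowerSeries.X ^ 3 * (1 - PowerSeries.X) * (Q⁻¹) ^ 2
      = ((PowerSeries.mk hh - 1) * Q ^ 2) * (Q⁻¹) ^ 2 := by rw [h1, ← key]
    _ = (PowerSeries.mk hh - 1) * (Q * Q⁻¹) ^ 2 := by ring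
    _ = PowerSeries.mk hh - 1 := by rw [hu]; ring

lemma coeff_eq (n : ℕ) (hn : n ≠ 0) :
    PowerSeries.coeff n
      (PowerSeries.X ^ 3 * (1 - PowerSeries.X) *
        (((1 : PowerSeries ℝ) - 3 * PowerSeries.X + PowerSeries.X ^ 2)⁻¹) ^ 2) = hh n := by
  rw [series_eq]
  simp [PowerSeries.coeff_one, hn]


/-- Let `c(n)` be the coefficient of `Xⁿ` in `X³(1 − X)/(1 − 3X + X²)²` over
`ℝ` and `α = (1 + √5)/2`.  Then `c(n)/(n·α^(2n)) → (√5 − 2)/5`. -/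
theorem avg_num_paths :
    Filter.Tendsto
      (fun n : ℕ =>
        PowerSeries.coeff n
            (PowerSeries.X ^ 3 * (1 - PowerSeries.X) *
              (((1 : PowerSeries ℝ) - 3 * PowerSeries.X + PowerSeries.X ^ 2)⁻¹) ^ 2) /
          ((n : ℝ) * ((1 + Real.sqrt 5) / 2) ^ (2 * n)))
      Filter.atTop (nhds ((Real.sqrt 5 - 2) / 5)) := by
  have hs : Real.sqrt 5 ^ 2 = 5 := Real.sq_sqrt (by norm_num)
  have hsnn : (0:ℝ) ≤ Real.sqrt 5 := Real.sqrt_nonneg 5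
  have hs2 : (2:ℝ) < Real.sqrt 5 := by nlinarith
  have hs3 : Real.sqrt 5 < 3 := by nlinarith
  set s := Real.sqrt 5
  set a : ℝ := (3 + s)/2 with ha_def
  set b : ℝ := (3 - s)/2 with hb_def
  have ha0 : (0:ℝ) < a := by rw [ha_def]; linarith
  have hb0 : (0:ℝ) < b := by rw [hb_def]; linarith
  have hq0 : (0:ℝ) ≤ b / a := le_of_lt (div_pos hb0 ha0)
  have hq1 : b / a < 1 := (div_lt_one ha0).mpr (by rw [ha_def, hb_def]; linarith)
  set A1 : ℝ := (s - 2)/5 with hA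
  set B1 : ℝ := 9/10 - 23 * s / 50 with hB
  set C1 : ℝ := (-2 - s)/5 with hC
  set D1 : ℝ := 9/10 + 23 * s / 50 with hD
  have l1 : Tendsto (fun n : ℕ => (1:ℝ)/n) atTop (nhds 0) :=
    tendsto_one_div_atTop_nhds_zero_nat
  have l2 : Tendsto (fun n : ℕ => (b/a)^n) atTop (nhds 0) :=
    tendsto_pow_atTop_nhds_zero_of_lt_one hq0 hq1
  have total : Tendsto
      (fun n : ℕ => A1 + (A1 + B1) * (1/(n:ℝ)) + (C1 + (C1 + D1) * (1/(n:ℝ))) * (b/a)^n)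
      atTop (nhds (A1 + (A1 + B1) * 0 + (C1 + (C1 + D1) * 0) * 0)) :=
    (tendsto_const_nhds.add (l1.const_mul _)).add
      ((tendsto_const_nhds.add (l1.const_mul _)).mul l2)
  have hlim : (A1 + (A1 + B1) * 0 + (C1 + (C1 + D1) * 0) * 0) = (s - 2)/5 := by
    rw [hA]; ring
  rw [hlim] at total
  refine total.congr' ?_
  filter_upwards [eventually_ge_atTop 1] with n hn
  have hn0 : (n:ℝ) ≠ 0 := by
    have : (0:ℝ) < (n:ℝ) := by exact_mod_cast hn
    linarith
  have hne : n ≠ 0 := by omega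
  rw [coeff_eq n hne]
  have hpow : ((1 + s) / 2) ^ (2*n) = a ^ n := by
    rw [pow_mul, show ((1 + s)/2)^2 = a by rw [ha_def]; linear_combination hs/4]
  rw [hpow]
  have hhe : hh n = (A1 * ((n:ℝ)+1) + B1) * a^n + (C1 * ((n:ℝ)+1) + D1) * b^n := by
    rw [hh, hA, hB, hC, hD, ha_def, hb_def]
  rw [hhe, div_pow]
  have han : a ^ n ≠ 0 := pow_ne_zero _ (ne_of_gt ha0)
  field_simp
  ring
end

section
/- Let c(n) be the coefficient of X^n in the formal power series X(1 − 7X + 20X² − 26X³ + 11X⁴)/((1 − X)(1 − 3X + X²)³) over ℝ, and let α = (1 + √5)/2. Then c(n)/(n²·α^{2n}) converges, as n → ∞, to (7 − 3√5)/20. (This series is the generating function, by size, of the total number of descendants summed over all nodes of all Elena trees; hence the average number of descendants of a node in a random Elena tree with n nodes is asymptotic to (5 − √5)n/20.) -/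
open PowerSeries Filter

noncomputable def fcAux (n : ℕ) : ℝ :=
  1 + ((7 - 3*Real.sqrt 5)/20 * (n:ℝ)^2 + (25 - Real.sqrt 5)/100 * (n:ℝ) + (Real.sqrt 5 - 5)/10)
        * ((3 + Real.sqrt 5)/2)^n
    + ((7 + 3*Real.sqrt 5)/20 * (n:ℝ)^2 + (25 + Real.sqrt 5)/100 * (n:ℝ) + (-Real.sqrt 5 - 5)/10)
        * ((3 - Real.sqrt 5)/2)^n

lemma fc_key (n : ℕ) :
    PowerSeries.coeff (R := ℝ) n
        (PowerSeries.X *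
          (1 - 7 * PowerSeries.X + 20 * PowerSeries.X ^ 2 -
            26 * PowerSeries.X ^ 3 + 11 * PowerSeries.X ^ 4) *
          (((1 : PowerSeries ℝ) - PowerSeries.X) *
            (1 - 3 * PowerSeries.X + PowerSeries.X ^ 2) ^ 3)⁻¹) = fcAux n := by
  have hs : Real.sqrt 5 ^ 2 = 5 := Real.sq_sqrt (by norm_num)
  set D : ℝ⟦X⟧ := ((1 : PowerSeries ℝ) - PowerSeries.X) *
      (1 - 3 * PowerSeries.X + PowerSeries.X ^ 2) ^ 3 with hDdef
  have hc : constantCoeff (R := ℝ) D ≠ 0 := by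
    simp [hDdef]
  have hmul : PowerSeries.mk fcAux * D =
      X * (1 - 7*X + 20*X^2 - 26*X^3 + 11*X^4) := by
    have hD : D = 1 - 10*X^1 + 39*X^2 - 75*X^3 + 75*X^4 - 39*X^5 + 10*X^6 - X^7 := by
      rw [hDdef]; ring
    have hN : (X : ℝ⟦X⟧) * (1 - 7*X + 20*X^2 - 26*X^3 + 11*X^4)
        = X^1 - 7*X^2 + 20*X^3 - 26*X^4 + 11*X^5 := by ring
    rw [hD, hN]
    ext n
    simp only [mul_sub, mul_add, mul_one, map_sub, map_add, mul_left_comm (mk fcAux),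
      coeff_mul_X_pow', ← map_ofNat (C (R := ℝ)) 10, ← map_ofNat (C (R := ℝ)) 39, ← map_ofNat (C (R := ℝ)) 75,
      ← map_ofNat (C (R := ℝ)) 7, ← map_ofNat (C (R := ℝ)) 20, ← map_ofNat (C (R := ℝ)) 26, ← map_ofNat (C (R := ℝ)) 11,
      coeff_C_mul, coeff_mk, coeff_one, coeff_X_pow, coeff_C]
    rcases Nat.lt_or_ge n 7 with h | h
    · interval_cases n
      · norm_num [fcAux]
        linear_combination ((0:ℝ)) * hs
      · norm_num [fcAux]
        linear_combination ((-3:ℝ)/50) * hs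
      · norm_num [fcAux]
        linear_combination ((-13:ℝ)/50) * hs
      · norm_num [fcAux]
        linear_combination (((367:ℝ)/100) + ((-8:ℝ)/25)*(Real.sqrt 5)^2) * hs
      · norm_num [fcAux]
        linear_combination (((-2917:ℝ)/400) + ((181:ℝ)/400)*(Real.sqrt 5)^2) * hs
      · norm_num [fcAux]
        linear_combination (((1487:ℝ)/800) + ((773:ℝ)/400)*(Real.sqrt 5)^2 + ((-37:ℝ)/160)*(Real.sqrt 5)^4) * hs
      · norm_num [fcAux]
        linear_combination (((-63:ℝ)/50) + ((579:ℝ)/400)*(Real.sqrt 5)^2 + ((-111:ℝ)/400)*(Real.sqrt 5)^4) * hs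
    · obtain ⟨m, rfl⟩ := Nat.exists_eq_add_of_le h
      simp only [show (1:ℕ) ≤ 7+m by omega, show (2:ℕ) ≤ 7+m by omega,
        show (3:ℕ) ≤ 7+m by omega, show (4:ℕ) ≤ 7+m by omega,
        show (5:ℕ) ≤ 7+m by omega, show (6:ℕ) ≤ 7+m by omega,
        show (7:ℕ) ≤ 7+m by omega,
        show ¬(7+m = 0) by omega, show ¬(7+m = 1) by omega, show ¬(7+m = 2) by omega,
        show ¬(7+m = 3) by omega, show ¬(7+m = 4) by omega, show ¬(7+m = 5) by omega,
        show 7+m-1 = 6+m by omega, show 7+m-2 = 5+m by omega, show 7+m-3 = 4+m by omega,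
        show 7+m-4 = 3+m by omega, show 7+m-5 = 2+m by omega, show 7+m-6 = 1+m by omega,
        show 7+m-7 = m by omega,
        show ¬(6+m = 0) by omega, show ¬(5+m = 0) by omega, show ¬(4+m = 0) by omega,
        show ¬(3+m = 0) by omega, show ¬(2+m = 0) by omega, show ¬(1+m = 0) by omega,
        if_true, if_false, ite_true, ite_false]
      simp only [fcAux, pow_add]
      push_cast
      linear_combination (((-31:ℝ)/64) * ((((3:ℝ)-Real.sqrt 5)/2)^m) + ((235:ℝ)/512) * ((((3:ℝ)-Real.sqrt 5)/2)^m) * (((m:ℕ):ℝ)) + ((35:ℝ)/512) * ((((3:ℝ)-Real.sqrt 5)/2)^m) * (((m:ℕ):ℝ))^2 + ((-31:ℝ)/64) * ((((3:ℝ)+Real.sqrt 5)/2)^m) + ((235:ℝ)/512) * ((((3:ℝ)+Real.sqrt 5)/2)^m) * (((m:ℕ):ℝ)) + ((35:ℝ)/512) * ((((3:ℝ)+Real.sqrt 5)/2)^m) * (((m:ℕ):ℝ))^2 + ((367:ℝ)/128) * (Real.sqrt 5) * ((((3:ℝ)-Real.sqrt 5)/2)^m) + ((31:ℝ)/64) *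 (Real.sqrt 5) * ((((3:ℝ)-Real.sqrt 5)/2)^m) * (((m:ℕ):ℝ)) + ((-5:ℝ)/128) * (Real.sqrt 5) * ((((3:ℝ)-Real.sqrt 5)/2)^m) * (((m:ℕ):ℝ))^2 + ((-367:ℝ)/128) * (Real.sqrt 5) * ((((3:ℝ)+Real.sqrt 5)/2)^m) + ((-31:ℝ)/64) * (Real.sqrt 5) * ((((3:ℝ)+Real.sqrt 5)/2)^m) * (((m:ℕ):ℝ)) + ((5:ℝ)/128) * (Real.sqrt 5) * ((((3:ℝ)+Real.sqrt 5)/2)^m) * (((m:ℕ):ℝ))^2 + ((-143:ℝ)/640) * (Real.sqrt 5)^2 * ((((3:ℝ)-Real.sqrt 5)/2)^m) + ((-353:ℝ)/512) * (Real.sqrt 5)^2 * ((((3:ℝ)-Real.sqrt 5)/2)^m) * (((m:ℕ):ℝ)) + ((-29:ℝ)/512) * (Real.sqrt 5)^2 * ((((3:ℝ)-Real.sqrt 5)/2)^m) * (((m:ℕ):ℝ))^2 + ((-143:ℝ)/640) * (Real.sqrt 5)^2 * ((((3:ℝ)+Real.sqrt 5)/2)^m) + ((-353:ℝ)/512) *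 (Real.sqrt 5)^2 * ((((3:ℝ)+Real.sqrt 5)/2)^m) * (((m:ℕ):ℝ)) + ((-29:ℝ)/512) * (Real.sqrt 5)^2 * ((((3:ℝ)+Real.sqrt 5)/2)^m) * (((m:ℕ):ℝ))^2 + ((-559:ℝ)/320) * (Real.sqrt 5)^3 * ((((3:ℝ)-Real.sqrt 5)/2)^m) + ((-17:ℝ)/80) * (Real.sqrt 5)^3 * ((((3:ℝ)-Real.sqrt 5)/2)^m) * (((m:ℕ):ℝ)) + ((1:ℝ)/64) * (Real.sqrt 5)^3 * ((((3:ℝ)-Real.sqrt 5)/2)^m) * (((m:ℕ):ℝ))^2 + ((559:ℝ)/320) * (Real.sqrt 5)^3 * ((((3:ℝ)+Real.sqrt 5)/2)^m) + ((17:ℝ)/80) * (Real.sqrt 5)^3 * ((((3:ℝ)+Real.sqrt 5)/2)^m) * (((m:ℕ):ℝ)) + ((-1:ℝ)/64) * (Real.sqrt 5)^3 * ((((3:ℝ)+Real.sqrt 5)/2)^m) * (((m:ℕ):ℝ))^2 + ((73:ℝ)/200) * (Real.sqrt 5)^4 * ((((3:ℝ)-Real.sqrt 5)/2)^m) + ((517:ℝ)/2560)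 * (Real.sqrt 5)^4 * ((((3:ℝ)-Real.sqrt 5)/2)^m) * (((m:ℕ):ℝ)) + ((37:ℝ)/2560) * (Real.sqrt 5)^4 * ((((3:ℝ)-Real.sqrt 5)/2)^m) * (((m:ℕ):ℝ))^2 + ((73:ℝ)/200) * (Real.sqrt 5)^4 * ((((3:ℝ)+Real.sqrt 5)/2)^m) + ((517:ℝ)/2560) * (Real.sqrt 5)^4 * ((((3:ℝ)+Real.sqrt 5)/2)^m) * (((m:ℕ):ℝ)) + ((37:ℝ)/2560) * (Real.sqrt 5)^4 * ((((3:ℝ)+Real.sqrt 5)/2)^m) * (((m:ℕ):ℝ))^2 + ((703:ℝ)/3200) * (Real.sqrt 5)^5 * ((((3:ℝ)-Real.sqrt 5)/2)^m) + ((37:ℝ)/1600) * (Real.sqrt 5)^5 * ((((3:ℝ)-Real.sqrt 5)/2)^m) * (((m:ℕ):ℝ)) + ((-1:ℝ)/640) * (Real.sqrt 5)^5 * ((((3:ℝ)-Real.sqrt 5)/2)^m) * (((m:ℕ):ℝ))^2 + ((-703:ℝ)/3200) * (Real.sqrt 5)^5 * ((((3:ℝ)+Real.sqrt 5)/2)^m)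 + ((-37:ℝ)/1600) * (Real.sqrt 5)^5 * ((((3:ℝ)+Real.sqrt 5)/2)^m) * (((m:ℕ):ℝ)) + ((1:ℝ)/640) * (Real.sqrt 5)^5 * ((((3:ℝ)+Real.sqrt 5)/2)^m) * (((m:ℕ):ℝ))^2 + ((-183:ℝ)/3200) * (Real.sqrt 5)^6 * ((((3:ℝ)-Real.sqrt 5)/2)^m) + ((-211:ℝ)/12800) * (Real.sqrt 5)^6 * ((((3:ℝ)-Real.sqrt 5)/2)^m) * (((m:ℕ):ℝ)) + ((-3:ℝ)/2560) * (Real.sqrt 5)^6 * ((((3:ℝ)-Real.sqrt 5)/2)^m) * (((m:ℕ):ℝ))^2 + ((-183:ℝ)/3200) * (Real.sqrt 5)^6 * ((((3:ℝ)+Real.sqrt 5)/2)^m) + ((-211:ℝ)/12800) * (Real.sqrt 5)^6 * ((((3:ℝ)+Real.sqrt 5)/2)^m) * (((m:ℕ):ℝ)) + ((-3:ℝ)/2560) * (Real.sqrt 5)^6 * ((((3:ℝ)+Real.sqrt 5)/2)^m) * (((m:ℕ):ℝ))^2) * hs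
  have hkey : X * (1 - 7*X + 20*X^2 - 26*X^3 + 11*X^4) * D⁻¹ = PowerSeries.mk fcAux := by
    rw [← hmul, mul_assoc, PowerSeries.mul_inv_cancel D hc, mul_one]
  rw [hkey, coeff_mk]

lemma split_lem (s U W nr : ℝ) (hn : nr ≠ 0) (hU : U ≠ 0) :
    (1 + ((7 - 3*s)/20 * nr^2 + (25 - s)/100 * nr + (s - 5)/10) * U
       + ((7 + 3*s)/20 * nr^2 + (25 + s)/100 * nr + (-s - 5)/10) * (W * U)) / (nr^2 * U)
    = (1/nr)^2 * U⁻¹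
      + ((7 - 3*s)/20 + (25 - s)/100 * (1/nr) + (s - 5)/10 * (1/nr)^2)
      + ((7 + 3*s)/20 + (25 + s)/100 * (1/nr) + (-s - 5)/10 * (1/nr)^2) * W := by
  field_simp

/-- Let `c(n)` be the coefficient of `Xⁿ` in
`X(1 − 7X + 20X² − 26X³ + 11X⁴)/((1 − X)(1 − 3X + X²)³)` over `ℝ` and
`α = (1 + √5)/2`.  Then `c(n)/(n²·α^(2n)) → (7 − 3√5)/20`. -/
theorem avg_num_descendants :
    Filter.Tendsto
      (fun n : ℕ =>
        PowerSeries.coeff (R := ℝ) n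
            (PowerSeries.X *
              (1 - 7 * PowerSeries.X + 20 * PowerSeries.X ^ 2 -
                26 * PowerSeries.X ^ 3 + 11 * PowerSeries.X ^ 4) *
              (((1 : PowerSeries ℝ) - PowerSeries.X) *
                (1 - 3 * PowerSeries.X + PowerSeries.X ^ 2) ^ 3)⁻¹) /
          ((n : ℝ) ^ 2 * ((1 + Real.sqrt 5) / 2) ^ (2 * n)))
      Filter.atTop (nhds ((7 - 3 * Real.sqrt 5) / 20)) := by
  have hs : Real.sqrt 5 ^ 2 = 5 := Real.sq_sqrt (by norm_num)
  have hs0 : (0:ℝ) ≤ Real.sqrt 5 := Real.sqrt_nonneg 5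
  have hu1 : 1 < (3 + Real.sqrt 5)/2 := by nlinarith
  have hu0 : (0:ℝ) < (3 + Real.sqrt 5)/2 := by linarith
  have hw0 : (0:ℝ) ≤ (7 - 3*Real.sqrt 5)/2 := by nlinarith
  have hw1 : (7 - 3*Real.sqrt 5)/2 < 1 := by nlinarith
  have halpha : ∀ n : ℕ, ((1 + Real.sqrt 5)/2)^(2*n) = ((3 + Real.sqrt 5)/2)^n := by
    intro n
    rw [pow_mul]
    congr 1
    linear_combination hs/4
  have hsplit : ∀ n : ℕ, 1 ≤ n → fcAux n / ((n:ℝ)^2 * ((3 + Real.sqrt 5)/2)^n) =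
      (1/(n:ℝ))^2 * (((3 + Real.sqrt 5)/2)^n)⁻¹
      + ((7 - 3*Real.sqrt 5)/20 + (25 - Real.sqrt 5)/100 * (1/(n:ℝ))
          + (Real.sqrt 5 - 5)/10 * (1/(n:ℝ))^2)
      + ((7 + 3*Real.sqrt 5)/20 + (25 + Real.sqrt 5)/100 * (1/(n:ℝ))
          + (-Real.sqrt 5 - 5)/10 * (1/(n:ℝ))^2) * ((7 - 3*Real.sqrt 5)/2)^n := by
    intro n hn
    have hn0 : ((n:ℝ)) ≠ 0 := Nat.cast_ne_zero.mpr (by omega)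
    have hU : ((3 + Real.sqrt 5)/2 : ℝ)^n ≠ 0 := pow_ne_zero _ (ne_of_gt hu0)
    have hv : ((3 - Real.sqrt 5)/2 : ℝ)^n
        = ((7 - 3*Real.sqrt 5)/2)^n * ((3 + Real.sqrt 5)/2)^n := by
      rw [← mul_pow]; congr 1; linear_combination ((3:ℝ)/4) * hs
    simp only [fcAux, hv]
    exact split_lem (Real.sqrt 5) _ _ _ hn0 hU
  have h1n : Tendsto (fun n : ℕ => 1/(n:ℝ)) atTop (nhds 0) :=
    tendsto_one_div_atTop_nhds_zero_nat
  have hUlim : Tendsto (fun n : ℕ => ((((3 + Real.sqrt 5)/2):ℝ)^n)⁻¹) atTop (nhds 0) := by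
    simp only [← inv_pow]
    apply tendsto_pow_atTop_nhds_zero_of_lt_one
    · positivity
    · exact inv_lt_one_of_one_lt₀ hu1
  have hWlim : Tendsto (fun n : ℕ => (((7 - 3*Real.sqrt 5)/2):ℝ)^n) atTop (nhds 0) :=
    tendsto_pow_atTop_nhds_zero_of_lt_one hw0 hw1
  have hglim : Tendsto (fun n : ℕ =>
      (1/(n:ℝ))^2 * (((3 + Real.sqrt 5)/2)^n)⁻¹
      + ((7 - 3*Real.sqrt 5)/20 + (25 - Real.sqrt 5)/100 * (1/(n:ℝ))
          + (Real.sqrt 5 - 5)/10 * (1/(n:ℝ))^2)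
      + ((7 + 3*Real.sqrt 5)/20 + (25 + Real.sqrt 5)/100 * (1/(n:ℝ))
          + (-Real.sqrt 5 - 5)/10 * (1/(n:ℝ))^2) * ((7 - 3*Real.sqrt 5)/2)^n)
      atTop (nhds ((0:ℝ)^2 * 0
      + ((7 - 3*Real.sqrt 5)/20 + (25 - Real.sqrt 5)/100 * 0 + (Real.sqrt 5 - 5)/10 * 0^2)
      + ((7 + 3*Real.sqrt 5)/20 + (25 + Real.sqrt 5)/100 * 0 + (-Real.sqrt 5 - 5)/10 * 0^2) * 0)) := by
    exact (((h1n.pow 2).mul hUlim).add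
      ((tendsto_const_nhds.add ((tendsto_const_nhds.mul h1n))).add
        (tendsto_const_nhds.mul (h1n.pow 2)))).add
      (((tendsto_const_nhds.add ((tendsto_const_nhds.mul h1n))).add
        (tendsto_const_nhds.mul (h1n.pow 2))).mul hWlim)
  have hglim' : Tendsto (fun n : ℕ =>
      (1/(n:ℝ))^2 * (((3 + Real.sqrt 5)/2)^n)⁻¹
      + ((7 - 3*Real.sqrt 5)/20 + (25 - Real.sqrt 5)/100 * (1/(n:ℝ))
          + (Real.sqrt 5 - 5)/10 * (1/(n:ℝ))^2)
      + ((7 + 3*Real.sqrt 5)/20 + (25 + Real.sqrt 5)/100 * (1/(n:ℝ))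
          + (-Real.sqrt 5 - 5)/10 * (1/(n:ℝ))^2) * ((7 - 3*Real.sqrt 5)/2)^n)
      atTop (nhds ((7 - 3 * Real.sqrt 5) / 20)) := by
    convert hglim using 2
    ring
  refine hglim'.congr' ?_
  filter_upwards [eventually_ge_atTop 1] with n hn
  rw [← hsplit n hn, fc_key n, halpha n]
end

section
/- For h ≥ 0, let F_h(X) = Σ_{n≥0} d(n,h) X^n ∈ ℤ⟦X⟧, where d(n,h) is the number of nondecreasing Dyck words of semilength n whose height is at most h (with d(0,h) = 1, counting the empty word). Then for every h ≥ 1, the formal power series identity (1 − 2X + X^{h+1})·(F_h(X) − 1) = X(1 − X)·F_{h−1}(X) holds. (Equivalently, the generating functions E_h(z) of Elena trees of height at most h satisfy E_h = z + z(1−z)/(1 − 2z + z^h) · E_{h−1}.) -/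
/-- `d(n, h)`: the number of nondecreasing Dyck words of semilength `n` whose
height is at most `h`. -/
noncomputable def numNondecDyckHeightLe (n h : ℕ) : ℕ :=
  {w : List Bool | w.length = 2 * n ∧ IsNondecDyck w ∧
    ∀ i, i ≤ w.length → prefixHeight w i ≤ (h : ℤ)}.ncard

/-- `F_h(X) = Σ d(n,h) Xⁿ ∈ ℤ⟦X⟧`. -/
noncomputable def heightGF (h : ℕ) : PowerSeries ℤ :=
  PowerSeries.mk fun n => (numNondecDyckHeightLe n h : ℤ)

namespace NDAux

lemma ph_nil (i : ℕ) : prefixHeight [] i = 0 := by simp [prefixHeight]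

lemma ph_zero (w : List Bool) : prefixHeight w 0 = 0 := by simp [prefixHeight]

lemma ph_cons (b : Bool) (w : List Bool) (i : ℕ) :
    prefixHeight (b :: w) (i + 1) = (if b then 1 else -1) + prefixHeight w i := by
  cases b <;> simp [prefixHeight, List.count_cons] <;> ring

lemma ph_append_left (u v : List Bool) {i : ℕ} (hi : i ≤ u.length) :
    prefixHeight (u ++ v) i = prefixHeight u i := by
  simp [prefixHeight, List.take_append_of_le_length hi]

lemma ph_append_right (u v : List Bool) (i : ℕ) :
    prefixHeight (u ++ v) (u.length + i) = prefixHeight u u.length + prefixHeight v i := by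
  simp [prefixHeight, List.take_append, List.count_append, List.take_length,
    List.take_of_length_le (Nat.le_add_right u.length i)]
  push_cast
  ring

lemma ph_succ (w : List Bool) {i : ℕ} (hi : i < w.length) :
    prefixHeight w (i + 1) = prefixHeight w i + (if w[i] then 1 else -1) := by
  have h1 : w.take (i+1) = w.take i ++ [w[i]] := by rw [← List.take_concat_get hi]; simp
  rcases hw : w[i] <;>
    simp [prefixHeight, h1, List.count_append, hw] <;> push_cast <;> ring

lemma ph_step_cases (w : List Bool) {i : ℕ} (hi : i < w.length) :
    (w[i] = true ∧ prefixHeight w (i+1) = prefixHeight w i + 1) ∨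
    (w[i] = false ∧ prefixHeight w (i+1) = prefixHeight w i - 1) := by
  rcases hw : w[i]
  · right; exact ⟨rfl, by rw [ph_succ w hi, hw]; simp; ring⟩
  · left; exact ⟨rfl, by rw [ph_succ w hi, hw]; simp⟩


def pyr (a : ℕ) : List Bool := List.replicate a true ++ List.replicate a false

lemma pyr_length (a : ℕ) : (pyr a).length = 2 * a := by simp [pyr]; ring

lemma count_take_pyr_true (a i : ℕ) : ((pyr a).take i).count true = min i a := by
  simp [pyr, List.take_append, List.take_replicate, List.count_append,
    List.count_replicate]

lemma count_take_pyr_false (a i : ℕ) (hi : i ≤ 2 * a) :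
    ((pyr a).take i).count false = i - min i a := by
  simp [pyr, List.take_append, List.take_replicate, List.count_append,
    List.count_replicate]
  omega

lemma ph_pyr (a i : ℕ) (hi : i ≤ 2 * a) :
    prefixHeight (pyr a) i = 2 * (min i a : ℤ) - i := by
  rw [prefixHeight, count_take_pyr_true, count_take_pyr_false a i hi]
  have : min i a ≤ i := Nat.min_le_left i a
  push_cast [this]
  ring

lemma ph_pyr_total (a : ℕ) : prefixHeight (pyr a) (2 * a) = 0 := by
  rw [ph_pyr a _ le_rfl]; simp; omega

lemma pyr_getElem?_lt (a i : ℕ) (hi : i < a) : (pyr a)[i]? = some true := by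
  rw [pyr, List.getElem?_append]
  simp [hi, List.getElem?_replicate]

lemma pyr_getElem?_ge (a i : ℕ) (hi : a ≤ i) (hi2 : i < 2 * a) : (pyr a)[i]? = some false := by
  rw [pyr, List.getElem?_append]
  have h1 : ¬ i < (List.replicate a true).length := by simp; omega
  simp only [h1, if_false]
  simp [List.getElem?_replicate]
  omega

/-- A Bool list with no adjacent (false, true) is trues then falses. -/
lemma all_false_of_noDU : ∀ (t : List Bool),
    (∀ i, ¬((false :: t)[i]? = some false ∧ (false :: t)[i+1]? = some true)) →
    ∀ b ∈ t, b = false := by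
  intro t
  induction t with
  | nil => intro _ b hb; simp at hb
  | cons c t' ih =>
    intro H b hb
    have hc : c = false := by
      by_contra hc
      exact H 0 ⟨rfl, by simp [(by simpa using hc : c = true)]⟩
    subst hc
    rcases List.mem_cons.mp hb with h | h
    · exact h
    · exact ih (fun i => by simpa using H (i+1)) b h

lemma sorted_of_noDU : ∀ (l : List Bool),
    (∀ i, ¬(l[i]? = some false ∧ l[i+1]? = some true)) →
    ∃ s t, l = List.replicate s true ++ List.replicate t false := by
  intro l
  induction l with
  | nil => exact fun _ => ⟨0, 0, rfl⟩
  | cons b t ih =>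
    intro H
    cases b with
    | true =>
      obtain ⟨s, u, hu⟩ := ih (fun i => by simpa using H (i+1))
      exact ⟨s + 1, u, by simp [List.replicate_succ, hu]⟩
    | false =>
      refine ⟨0, t.length + 1, ?_⟩
      have := all_false_of_noDU t H
      simp [List.replicate_succ]
      exact List.eq_replicate_of_mem this


def SS (n h : ℕ) : Set (List Bool) :=
  {w : List Bool | w.length = 2 * n ∧ IsNondecDyck w ∧
    ∀ i, i ≤ w.length → prefixHeight w i ≤ (h : ℤ)}

lemma decomp {n h : ℕ} (hn : 1 ≤ n) (hh : 1 ≤ h) {w : List Bool} (hw : w ∈ SS n h) :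
    (∃ a ∈ Finset.Icc 1 (min h (n-1)), ∃ w' ∈ SS (n-a) h, w = pyr a ++ w') ∨
    (∃ c ∈ SS (n-1) (h-1), w = true :: (c ++ [false])) := by
  obtain ⟨hlen, ⟨⟨hpos, htot⟩, hval⟩, hht⟩ := hw
  have hlen2 : 2 ≤ w.length := by omega
  have hex : ∃ r, 0 < r ∧ prefixHeight w r = 0 :=
    ⟨w.length, by omega, htot⟩
  classical
  set r := Nat.find hex with hrdef
  obtain ⟨hr0, hrph⟩ : 0 < r ∧ prefixHeight w r = 0 := Nat.find_spec hex
  have hrle : r ≤ w.length := Nat.find_min' hex ⟨by omega, htot⟩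
  have hpos1 : ∀ s, 0 < s → s < r → 1 ≤ prefixHeight w s := by
    intro s hs hsr
    have h1 : ¬(0 < s ∧ prefixHeight w s = 0) := Nat.find_min hex hsr
    have h2 : 0 ≤ prefixHeight w s := hpos s (by omega)
    have : prefixHeight w s ≠ 0 := fun h => h1 ⟨hs, h⟩
    omega
  have hr2 : 2 ≤ r := by
    by_contra hcon
    have hr1 : r = 1 := by omega
    rcases ph_step_cases w (show 0 < w.length by omega) with ⟨_, h⟩ | ⟨_, h⟩ <;>
      rw [ph_zero] at h <;> rw [hr1, h] at hrph <;> simp at hrph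
  -- last step of the first component is a D
  have hlast : w[r-1] = false ∧ prefixHeight w (r-1) = 1 := by
    have hlt : r - 1 < w.length := by omega
    have h1 : 1 ≤ prefixHeight w (r-1) := hpos1 _ (by omega) (by omega)
    have heq : r - 1 + 1 = r := by omega
    rcases ph_step_cases w hlt with ⟨hb, h⟩ | ⟨hb, h⟩
    · rw [heq, hrph] at h; omega
    · rw [heq, hrph] at h; exact ⟨hb, by omega⟩
  rcases lt_or_eq_of_le hrle with hcase | hcase
  · -- r < w.length : first component is a pyramid
    left
    have hnext : w[r] = true := by
      rcases ph_step_cases w hcase with ⟨hb, _⟩ | ⟨hb, h⟩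
      · exact hb
      · have := hpos (r+1) (by omega)
        rw [h, hrph] at this; omega
    have hvalleyR : IsValley w (r-1) := by
      refine ⟨?_, ?_⟩
      · rw [List.getElem?_eq_getElem (by omega : r - 1 < w.length), hlast.1]
      · have : r - 1 + 1 = r := by omega
        rw [this, List.getElem?_eq_getElem hcase, hnext]
    have noDU : ∀ i, i + 1 < r → ¬(w[i]? = some false ∧ w[i+1]? = some true) := by
      rintro i hi ⟨h1, h2⟩
      have hv : IsValley w i := ⟨h1, h2⟩
      have := hval i (r-1) hv hvalleyR (by omega)
      rw [(by omega : r - 1 + 1 = r), hrph] at this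
      have := hpos1 (i+1) (by omega) (by omega)
      omega
    set l := w.take r with hl
    have hllen : l.length = r := by simp [hl]; omega
    have hltake : ∀ i, i ≤ r → l.take i = w.take i := by
      intro i hi
      simp [hl, List.take_take, Nat.min_eq_left hi]
    have hphl : ∀ i, i ≤ r → prefixHeight l i = prefixHeight w i := by
      intro i hi; simp [prefixHeight, hltake i hi]
    obtain ⟨s, t, hst⟩ : ∃ s t, l = List.replicate s true ++ List.replicate t false := by
      apply sorted_of_noDU
      intro i ⟨h1, h2⟩
      have hi2 : i + 1 < l.length := (List.getElem?_eq_some_iff.mp h2).1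
      have hi3 : i + 1 < r := by omega
      refine noDU i hi3 ⟨?_, ?_⟩
      · rw [← h1, hl, List.getElem?_take]; simp [show i < r by omega]
      · rw [← h2, hl, List.getElem?_take]; simp [hi3]
    have hstr : s + t = r := by
      have := hllen; rw [hst] at this; simpa using this
    have hsteq : s = t := by
      have h0 : prefixHeight l r = 0 := by rw [hphl r le_rfl]; exact hrph
      have : prefixHeight l r = (s : ℤ) - t := by
        rw [prefixHeight]
        have : l.take r = l := by rw [← hllen]; exact List.take_length
        rw [this, hst]
        simp [List.count_append, List.count_replicate]
      omega
    have hlpyr : l = pyr s := by rw [hst, pyr, hsteq]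
    have hr2s : r = 2 * s := by omega
    have hwdec : w = l ++ w.drop r := by simp [hl]
    set w' := w.drop r with hw'
    have hw'len : w'.length = 2 * (n - s) := by simp [hw']; omega
    have hphw' : ∀ i, prefixHeight w (r + i) = prefixHeight w' i := by
      intro i
      conv_lhs => rw [hwdec]
      rw [← hllen, ph_append_right, hllen, hphl r le_rfl, hrph, zero_add]
    have hvalley' : ∀ i, IsValley w' i ↔ IsValley w (r + i) := by
      intro i
      unfold IsValley
      rw [hw', List.getElem?_drop, List.getElem?_drop, Nat.add_assoc]
    have hs1 : 1 ≤ s := by omega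
    have hsn : s ≤ n - 1 := by omega
    have hsh : s ≤ h := by
      have h1 := hht s (by omega)
      have h2 : prefixHeight w s = s := by
        rw [← hphl s (by omega), hlpyr, ph_pyr s s (by omega)]
        simp
        ring
      omega
    refine ⟨s, Finset.mem_Icc.mpr ⟨hs1, le_min hsh hsn⟩, w', ⟨hw'len, ⟨⟨?_, ?_⟩, ?_⟩, ?_⟩, ?_⟩
    · intro i hi
      rw [← hphw' i]; exact hpos _ (by omega)
    · rw [← hphw' w'.length]
      have : r + w'.length = w.length := by omega
      rw [this, htot]
    · intro i j hi hj hij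
      have h1 := hval (r+i) (r+j) ((hvalley' i).mp hi) ((hvalley' j).mp hj) (by omega)
      rw [show r + i + 1 = r + (i+1) by ring, show r + j + 1 = r + (j+1) by ring,
        hphw', hphw'] at h1
      exact h1
    · intro i hi
      rw [← hphw' i]; exact hht _ (by omega)
    · rw [← hlpyr]; exact hwdec
  · -- r = w.length : w = U c D
    right
    have hfirst : w[0]? = some true := by
      rcases ph_step_cases w (show 0 < w.length by omega) with ⟨hb, _⟩ | ⟨hb, h⟩
      · rw [List.getElem?_eq_getElem (by omega : 0 < w.length), hb]
      · exfalso
        have h1 := hpos1 1 one_pos (lt_of_lt_of_le one_lt_two hr2)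
        rw [ph_zero] at h
        norm_num at h
        omega
    obtain ⟨b, t, hbt⟩ : ∃ b t, w = b :: t := by
      cases w with
      | nil => simp at hlen2
      | cons b t => exact ⟨b, t, rfl⟩
    have hb : b = true := by rw [hbt] at hfirst; simpa using hfirst
    have htne : t ≠ [] := by
      intro hcon; rw [hbt, hcon] at hlen2; simp at hlen2
    obtain ⟨c, x, htcx⟩ : ∃ L b, t = L ++ [b] := by
      rcases List.eq_nil_or_concat t with h | ⟨L, y, hLy⟩
      · exact absurd h htne
      · exact ⟨L, y, by rw [hLy, List.concat_eq_append]⟩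
    have hwcx : w = true :: (c ++ [x]) := by rw [hbt, hb, htcx]
    have hlenc : w.length = c.length + 2 := by rw [hwcx]; simp
    have hlast1 : w[w.length - 1]? = some false := by
      have h2 : w[r - 1]? = some false := by
        rw [List.getElem?_eq_getElem (by omega : r - 1 < w.length), hlast.1]
      rwa [hcase] at h2
    have hx : x = false := by
      have e : w[w.length - 1]? = some x := by
        rw [hlenc, hwcx, show c.length + 2 - 1 = c.length + 1 from rfl,
          List.getElem?_cons_succ, List.getElem?_append_right le_rfl]
        simp
      rw [e] at hlast1; simpa using hlast1
    have hwc : w = true :: (c ++ [false]) := by rw [hwcx, hx]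
    have hclen : c.length = 2 * (n - 1) := by omega
    have hphc : ∀ i, i ≤ c.length → prefixHeight c i = prefixHeight w (i+1) - 1 := by
      intro i hi
      rw [hwc, ph_cons, ph_append_left _ _ hi]
      simp
    have hvalleyc : ∀ i, IsValley c i → IsValley w (i+1) := by
      rintro i ⟨h1, h2⟩
      have hi1 : i < c.length := (List.getElem?_eq_some_iff.mp h1).1
      have hi2 : i + 1 < c.length := (List.getElem?_eq_some_iff.mp h2).1
      constructor
      · rw [hwc, List.getElem?_cons_succ, List.getElem?_append_left hi1, h1]
      · rw [hwc, show i + 1 + 1 = (i+1) + 1 from rfl, List.getElem?_cons_succ,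
          List.getElem?_append_left hi2, h2]
    refine ⟨c, ⟨hclen, ⟨⟨?_, ?_⟩, ?_⟩, ?_⟩, hwc⟩
    · intro i hi
      rw [hphc i hi]
      have := hpos1 (i+1) (by omega) (by omega)
      omega
    · rw [hphc _ le_rfl]
      have h1 : c.length + 1 = r - 1 := by omega
      rw [h1, hlast.2]
      norm_num
    · intro i j hi hj hij
      have hi1 : i < c.length := (List.getElem?_eq_some_iff.mp hi.1).1
      have hj1 : j + 1 < c.length := (List.getElem?_eq_some_iff.mp hj.2).1
      have := hval (i+1) (j+1) (hvalleyc i hi) (hvalleyc j hj) (by omega)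
      rw [show i + 1 + 1 = (i+1)+1 from rfl] at this
      rw [hphc (i+1) (by omega), hphc (j+1) (by omega)]
      omega
    · intro i hi
      rw [hphc i hi]
      have h1 := hht (i+1) (by omega)
      have h2 : ((h - 1 : ℕ) : ℤ) = (h : ℤ) - 1 := by omega
      omega

lemma ph_pyr_append (a : ℕ) (w' : List Bool) {i : ℕ} (hi : i ≤ 2 * a) :
    prefixHeight (pyr a ++ w') i = 2 * (min i a : ℤ) - i := by
  rw [ph_append_left _ _ (by rw [pyr_length]; omega), ph_pyr a i hi]

lemma ph_pyr_append_right (a : ℕ) (w' : List Bool) (j : ℕ) :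
    prefixHeight (pyr a ++ w') (2 * a + j) = prefixHeight w' j := by
  have h := ph_append_right (pyr a) w' j
  have h2 : prefixHeight (pyr a) ((pyr a).length) = 0 := by
    rw [pyr_length]; exact ph_pyr_total a
  rw [h2, zero_add] at h
  rwa [pyr_length] at h

lemma UcD_ph_succ (c : List Bool) {i : ℕ} (hi : i ≤ c.length) :
    prefixHeight (true :: (c ++ [false])) (i + 1) = 1 + prefixHeight c i := by
  rw [ph_cons, ph_append_left _ _ hi]; simp

lemma UcD_ph_last (c : List Bool) (hc : prefixHeight c c.length = 0) :
    prefixHeight (true :: (c ++ [false])) (c.length + 2) = 0 := by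
  rw [show c.length + 2 = (c.length + 1) + 1 from rfl, ph_cons]
  have h := ph_append_right c [false] 1
  rw [h, hc]
  simp [prefixHeight]

/-- membership: U c D -/
lemma mem_UcD {m h : ℕ} (hh : 1 ≤ h) {c : List Bool} (hc : c ∈ SS m (h - 1)) :
    (true :: (c ++ [false])) ∈ SS (m + 1) h := by
  obtain ⟨hclen, ⟨⟨hcpos, hctot⟩, hcval⟩, hcht⟩ := hc
  set w := true :: (c ++ [false]) with hw
  have hwlen : w.length = c.length + 2 := by simp [hw]
  -- valleys of w come from valleys of c
  have hvall : ∀ i, IsValley w i → 1 ≤ i ∧ IsValley c (i - 1) := by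
    rintro i ⟨h1, h2⟩
    have hi1 : 1 ≤ i := by
      rcases Nat.eq_zero_or_pos i with h0 | h0
      · rw [h0] at h1; simp [hw] at h1
      · exact h0
    obtain ⟨k, rfl⟩ : ∃ k, i = k + 1 := ⟨i - 1, by omega⟩
    rw [hw, List.getElem?_cons_succ] at h1
    rw [hw, List.getElem?_cons_succ] at h2
    have hk1 : k + 1 < c.length := by
      by_contra hcon
      rcases Nat.lt_or_ge (k+1) (c ++ [false]).length with h3 | h3
      · have : k + 1 = c.length := by simp at h3; omega
        rw [List.getElem?_append_right (by omega), this] at h2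
        simp at h2
      · rw [List.getElem?_eq_none (by omega)] at h2; simp at h2
    refine ⟨hi1, ?_, ?_⟩ <;> simp only [Nat.add_sub_cancel]
    · rw [← List.getElem?_append_left (by omega : k < c.length) (l₂ := [false])]
      simpa using h1
    · rw [← List.getElem?_append_left hk1 (l₂ := [false])]
      exact h2
  refine ⟨?_, ⟨⟨?_, ?_⟩, ?_⟩, ?_⟩
  · rw [hwlen, hclen]; ring
  · intro i hi
    rcases Nat.eq_zero_or_pos i with h0 | h0
    · rw [h0, ph_zero]
    · obtain ⟨j, rfl⟩ : ∃ j, i = j + 1 := ⟨i - 1, by omega⟩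
      rcases Nat.lt_or_ge j (c.length + 1) with h3 | h3
      · rw [show w = true :: (c ++ [false]) from hw] at hi ⊢
        rcases Nat.lt_or_ge j c.length with h4 | h4
        · rw [UcD_ph_succ c (le_of_lt h4)]
          have := hcpos j (le_of_lt h4)
          omega
        · have h5 : j = c.length := by omega
          rw [h5, UcD_ph_succ c le_rfl, hctot]
          norm_num
      · have h5 : j = c.length + 1 := by rw [hwlen] at hi; omega
        rw [h5, show c.length + 1 + 1 = c.length + 2 from rfl, UcD_ph_last c hctot]
  · rw [hwlen, show c.length + 2 = (c.length + 1) + 1 from rfl]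
    exact UcD_ph_last c hctot
  · intro i j hi hj hij
    obtain ⟨hi1, hvi⟩ := hvall i hi
    obtain ⟨hj1, hvj⟩ := hvall j hj
    have hile : i - 1 < c.length := (List.getElem?_eq_some_iff.mp hvi.1).1
    have hjle : j - 1 + 1 < c.length := (List.getElem?_eq_some_iff.mp hvj.2).1
    have := hcval (i-1) (j-1) hvi hvj (by omega)
    rw [show i + 1 = (i - 1 + 1) + 1 by omega, show j + 1 = (j - 1 + 1) + 1 by omega,
      UcD_ph_succ c (by omega), UcD_ph_succ c (by omega)]
    omega
  · intro i hi
    rcases Nat.eq_zero_or_pos i with h0 | h0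
    · rw [h0, ph_zero]; exact_mod_cast Nat.zero_le h
    · obtain ⟨j, rfl⟩ : ∃ j, i = j + 1 := ⟨i - 1, by omega⟩
      rcases Nat.lt_or_ge j (c.length + 1) with h3 | h3
      · rcases Nat.lt_or_ge j c.length with h4 | h4
        · rw [UcD_ph_succ c (le_of_lt h4)]
          have := hcht j (le_of_lt h4)
          have hcast : ((h - 1 : ℕ) : ℤ) = (h : ℤ) - 1 := by omega
          omega
        · have h5 : j = c.length := by omega
          rw [h5, UcD_ph_succ c le_rfl, hctot]
          omega
      · have h5 : j = c.length + 1 := by rw [hwlen] at hi; omega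
        rw [h5, show c.length + 1 + 1 = c.length + 2 from rfl, UcD_ph_last c hctot]
        exact_mod_cast Nat.zero_le h

/-- membership: pyramid prepended -/
lemma mem_pyr_append {a m h : ℕ} (ha1 : 1 ≤ a) (hah : a ≤ h) (hm : 1 ≤ m)
    {w' : List Bool} (hw' : w' ∈ SS m h) : (pyr a ++ w') ∈ SS (a + m) h := by
  obtain ⟨hlen', ⟨⟨hpos', htot'⟩, hval'⟩, hht'⟩ := hw'
  set w := pyr a ++ w' with hwdef
  have hwlen : w.length = 2 * a + w'.length := by simp [hwdef, pyr_length]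
  have hphi : ∀ i, i ≤ 2 * a → prefixHeight w i = 2 * (min i a : ℤ) - i :=
    fun i hi => ph_pyr_append a w' hi
  have hphr : ∀ j, prefixHeight w (2 * a + j) = prefixHeight w' j :=
    ph_pyr_append_right a w'
  -- valleys of w at positions ≥ 2a-1 only
  have hvw : ∀ i, IsValley w i → i = 2*a - 1 ∨ (2*a ≤ i ∧ IsValley w' (i - 2*a)) := by
    rintro i ⟨h1, h2⟩
    rcases Nat.lt_or_ge i (2*a) with hlt | hge
    · left
      by_contra hne
      have hia : a ≤ i := by
        by_contra hcon
        rw [hwdef, List.getElem?_append_left (by rw [pyr_length]; omega),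
          pyr_getElem?_lt a i (by omega)] at h1
        simp at h1
      have hi1 : i + 1 < 2*a := by omega
      rw [hwdef, List.getElem?_append_left (by rw [pyr_length]; omega),
        pyr_getElem?_ge a (i+1) (by omega) hi1] at h2
      simp at h2
    · right
      refine ⟨hge, ?_, ?_⟩
      · have hd : w.drop (2*a) = w' := by
          rw [hwdef, ← pyr_length a, List.drop_left]
        rw [← hd, List.getElem?_drop, show 2*a + (i - 2*a) = i by omega]
        exact h1
      · have : w.drop (2*a) = w' := by
          rw [hwdef, ← pyr_length a, List.drop_left]
        rw [← this, List.getElem?_drop, show 2*a + (i - 2*a + 1) = i + 1 by omega]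
        exact h2
  have hvw' : ∀ i, IsValley w' i → IsValley w (2*a + i) := by
    rintro i ⟨h1, h2⟩
    constructor
    · rw [hwdef, List.getElem?_append_right (by rw [pyr_length]; omega), pyr_length,
        show 2*a + i - 2*a = i by omega]
      exact h1
    · rw [hwdef, List.getElem?_append_right (by rw [pyr_length]; omega), pyr_length,
        show 2*a + i + 1 - 2*a = i + 1 by omega]
      exact h2
  have hDyckPos : ∀ i, i ≤ w.length → 0 ≤ prefixHeight w i := by
    intro i hi
    rcases Nat.lt_or_ge i (2*a) with hlt | hge
    · rw [hphi i (by omega)]; omega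
    · rw [show i = 2*a + (i - 2*a) by omega, hphr]
      exact hpos' _ (by omega)
  refine ⟨?_, ⟨⟨hDyckPos, ?_⟩, ?_⟩, ?_⟩
  · rw [hwlen, hlen']; ring
  · rw [hwlen, hphr, htot']
  · intro i j hi hj hij
    have hj1 : 0 ≤ prefixHeight w (j+1) :=
      hDyckPos (j+1) (by
        have := (List.getElem?_eq_some_iff.mp hj.2).1
        omega)
    rcases hvw i hi with h0 | ⟨hge, hvi⟩
    · rw [h0, show 2*a - 1 + 1 = 2*a by omega, show 2*a = 2*a + 0 by omega, hphr, ph_zero]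
      exact hj1
    · rcases hvw j hj with h0' | ⟨hge', hvj⟩
      · omega
      · have := hval' (i - 2*a) (j - 2*a) hvi hvj (by omega)
        rw [show i + 1 = 2*a + (i - 2*a + 1) by omega, show j + 1 = 2*a + (j - 2*a + 1) by omega,
          hphr, hphr]
        exact this
  · intro i hi
    rcases Nat.lt_or_ge i (2*a) with hlt | hge
    · rw [hphi i (by omega)]
      have : (min i a : ℤ) ≤ a := by exact_mod_cast Nat.min_le_right i a
      have : (min i a : ℤ) ≤ i := by exact_mod_cast Nat.min_le_left i a
      have hha : (a : ℤ) ≤ h := by exact_mod_cast hah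
      have := Nat.min_le_right i a
      omega
    · rw [show i = 2*a + (i - 2*a) by omega, hphr]
      exact hht' _ (by omega)

lemma SS_finite (n h : ℕ) : (SS n h).Finite :=
  (List.finite_length_eq Bool (2*n)).subset (fun _ hw => hw.1)

lemma A_ph_zero (a : ℕ) (w' : List Bool) : prefixHeight (pyr a ++ w') (2*a) = 0 := by
  have := ph_pyr_append_right a w' 0
  rw [Nat.add_zero, ph_zero] at this
  exact this

lemma A_ph_pos (a : ℕ) (w' : List Bool) {i : ℕ} (h0 : 0 < i) (h2 : i < 2*a) :
    0 < prefixHeight (pyr a ++ w') i := by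
  rw [ph_pyr_append a w' (le_of_lt h2)]
  omega

lemma B_ph_pos {m h' : ℕ} {c : List Bool} (hc : c ∈ SS m h') {i : ℕ} (h0 : 0 < i)
    (hl : i < (true :: (c ++ [false])).length) :
    0 < prefixHeight (true :: (c ++ [false])) i := by
  obtain ⟨hclen, ⟨⟨hcpos, _⟩, _⟩, _⟩ := hc
  obtain ⟨j, rfl⟩ : ∃ j, i = j + 1 := ⟨i - 1, by omega⟩
  have hj : j ≤ c.length := by simp at hl; omega
  rw [UcD_ph_succ c hj]
  have := hcpos j hj
  omega

lemma SS_decomp {n h : ℕ} (hn : 1 ≤ n) (hh : 1 ≤ h) :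
    SS n h = (⋃ a ∈ Finset.Icc 1 (min h (n-1)), (fun w' => pyr a ++ w') '' SS (n-a) h) ∪
      ((fun c => true :: (c ++ [false])) '' SS (n-1) (h-1)) := by
  ext w
  constructor
  · intro hw
    rcases decomp hn hh hw with ⟨a, ha, w', hw', heq⟩ | ⟨c, hc, heq⟩
    · left
      exact Set.mem_biUnion ha ⟨w', hw', heq.symm⟩
    · right
      exact ⟨c, hc, heq.symm⟩
  · intro hw
    rcases hw with hw | hw
    · obtain ⟨a, ha, w', hw', heq⟩ := Set.mem_iUnion₂.mp hw
      rw [Finset.mem_Icc] at ha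
      have := mem_pyr_append ha.1 (le_trans ha.2 (min_le_left _ _)) (by omega : 1 ≤ n - a) hw'
      rw [show a + (n - a) = n by omega] at this
      rw [← heq]
      exact this
    · obtain ⟨c, hc, heq⟩ := hw
      have := mem_UcD hh hc
      rw [show n - 1 + 1 = n by omega] at this
      rw [← heq]
      exact this

lemma pyr_append_inj (a : ℕ) : Function.Injective (fun w' : List Bool => pyr a ++ w') :=
  fun _ _ hxy => List.append_cancel_left hxy

lemma UcD_inj : Function.Injective (fun c : List Bool => true :: (c ++ [false])) := by
  intro x y hxy
  simp only [List.cons.injEq, true_and] at hxy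
  exact List.append_cancel_right hxy

lemma card_rec {n h : ℕ} (hn : 1 ≤ n) (hh : 1 ≤ h) :
    (SS n h).ncard =
      (∑ a ∈ Finset.Icc 1 (min h (n-1)), (SS (n-a) h).ncard) + (SS (n-1) (h-1)).ncard := by
  classical
  have key : ∀ k, k ≤ min h (n-1) →
      ((⋃ a ∈ Finset.Icc 1 k, (fun w' => pyr a ++ w') '' SS (n-a) h) ∪
        ((fun c => true :: (c ++ [false])) '' SS (n-1) (h-1))).ncard
        = (∑ a ∈ Finset.Icc 1 k, (SS (n-a) h).ncard) + (SS (n-1) (h-1)).ncard := by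
    intro k
    induction k with
    | zero =>
      intro _
      simp [Set.ncard_image_of_injective _ UcD_inj]
    | succ k ih =>
      intro hk
      have hIcc : Finset.Icc 1 (k+1) = insert (k+1) (Finset.Icc 1 k) := by
        ext x
        simp [Finset.mem_Icc, Finset.mem_insert]
        omega
      rw [hIcc]
      rw [Finset.set_biUnion_insert, Finset.sum_insert (by simp)]
      rw [Set.union_assoc]
      have hfin1 : ((fun w' => pyr (k+1) ++ w') '' SS (n-(k+1)) h).Finite :=
        (SS_finite _ _).image _
      have hfin2 : ((⋃ a ∈ Finset.Icc 1 k, (fun w' => pyr a ++ w') '' SS (n-a) h) ∪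
          ((fun c => true :: (c ++ [false])) '' SS (n-1) (h-1))).Finite := by
        apply Set.Finite.union
        · exact Set.Finite.biUnion (Finset.Icc 1 k).finite_toSet
            (fun a _ => (SS_finite _ _).image _)
        · exact (SS_finite _ _).image _
      have hdisj : Disjoint ((fun w' => pyr (k+1) ++ w') '' SS (n-(k+1)) h)
          ((⋃ a ∈ Finset.Icc 1 k, (fun w' => pyr a ++ w') '' SS (n-a) h) ∪
            ((fun c => true :: (c ++ [false])) '' SS (n-1) (h-1))) := by
        rw [Set.disjoint_left]
        rintro w ⟨w1, hw1, rfl⟩ hmem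
        have hz : prefixHeight (pyr (k+1) ++ w1) (2*(k+1)) = 0 := A_ph_zero _ _
        rcases hmem with hmem | hmem
        · obtain ⟨a, ha, w2, hw2, heq⟩ := Set.mem_iUnion₂.mp hmem
          rw [Finset.mem_Icc] at ha
          have heq' : pyr a ++ w2 = pyr (k+1) ++ w1 := heq
          have hz' : prefixHeight (pyr a ++ w2) (2*a) = 0 := A_ph_zero _ _
          have hpos : 0 < prefixHeight (pyr (k+1) ++ w1) (2*a) :=
            A_ph_pos (k+1) w1 (by omega) (by omega)
          rw [heq'] at hz'
          omega
        · obtain ⟨c, hc, heq⟩ := hmem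
          have heq' : true :: (c ++ [false]) = pyr (k+1) ++ w1 := heq
          have hlen1 : w1.length = 2 * (n - (k+1)) := hw1.1
          have hlen : (pyr (k+1) ++ w1).length = 2*(k+1) + 2*(n-(k+1)) := by
            simp [pyr_length, hlen1]
          have hpos : 0 < prefixHeight (true :: (c ++ [false])) (2*(k+1)) := by
            apply B_ph_pos hc (by omega)
            rw [heq', hlen]
            omega
          rw [heq'] at hpos
          omega
      rw [Set.ncard_union_eq hdisj hfin1 hfin2,
        Set.ncard_image_of_injective _ (pyr_append_inj (k+1)),
        ih (by omega)]
      ring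
  rw [SS_decomp hn hh]
  exact key _ le_rfl

lemma SS_zero (h : ℕ) : SS 0 h = {([] : List Bool)} := by
  ext w
  constructor
  · intro hw
    have := hw.1
    simp at this
    simpa using this
  · intro hw
    rw [Set.mem_singleton_iff] at hw
    subst hw
    refine ⟨by simp, ⟨⟨fun i _ => by rw [ph_nil], by rw [ph_nil]⟩, ?_⟩, fun i _ => by
      rw [ph_nil]; exact_mod_cast Nat.zero_le h⟩
    rintro i j ⟨h1, _⟩ _ _
    simp at h1

lemma card_SS_zero (h : ℕ) : (SS 0 h).ncard = 1 := by
  rw [SS_zero]; simp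

end NDAux

open NDAux in
/-- For every `h ≥ 1`:
`(1 − 2X + X^(h+1))·(F_h(X) − 1) = X(1 − X)·F_(h−1)(X)`. -/
theorem heightGF_recurrence (h : ℕ) (hh : 1 ≤ h) :
    ((1 : PowerSeries ℤ) - 2 * PowerSeries.X + PowerSeries.X ^ (h + 1)) *
        (heightGF h - 1) =
      PowerSeries.X * (1 - PowerSeries.X) * heightGF (h - 1) := by
  classical
  have hD : ∀ n h', numNondecDyckHeightLe n h' = (SS n h').ncard := fun _ _ => rfl
  set X : PowerSeries ℤ := PowerSeries.X with hX
  set p : PowerSeries ℤ := ∑ a ∈ Finset.Icc 1 h, X ^ a with hp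
  have geom : ∀ m : ℕ, (1 - X) * (∑ a ∈ Finset.Icc 1 m, X ^ a) = X - X ^ (m+1) := by
    intro m
    induction m with
    | zero => simp
    | succ m ih =>
      rw [Finset.sum_Icc_succ_top (by omega), mul_add, ih]
      ring
  have hG : ∀ m, PowerSeries.coeff m (heightGF h - 1) =
      (if m = 0 then 0 else ((SS m h).ncard : ℤ)) := by
    intro m
    rw [map_sub, PowerSeries.coeff_one, heightGF, PowerSeries.coeff_mk]
    rcases Nat.eq_zero_or_pos m with rfl | hm
    · have h0 : numNondecDyckHeightLe 0 h = 1 := by rw [hD, card_SS_zero]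
      simp [h0]
    · have hm' : m ≠ 0 := by omega
      simp [hm', hD]
  have step1 : (1 - p) * (heightGF h - 1) = X * heightGF (h - 1) := by
    apply PowerSeries.ext
    intro n
    rw [sub_mul, one_mul, map_sub, hp, Finset.sum_mul, map_sum]
    have hterm : ∀ a ∈ Finset.Icc 1 h, PowerSeries.coeff n (X ^ a * (heightGF h - 1)) =
        if a ≤ n then PowerSeries.coeff (n - a) (heightGF h - 1) else 0 := by
      intro a _
      rw [mul_comm, hX, PowerSeries.coeff_mul_X_pow']
    rw [Finset.sum_congr rfl hterm]
    have hRHS : PowerSeries.coeff n (X * heightGF (h-1)) =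
        if 1 ≤ n then ((SS (n-1) (h-1)).ncard : ℤ) else 0 := by
      rw [show X * heightGF (h-1) = heightGF (h-1) * X ^ 1 by ring, hX,
        PowerSeries.coeff_mul_X_pow', heightGF]
      by_cases h1 : 1 ≤ n <;> simp [h1, PowerSeries.coeff_mk, hD]
    rw [hRHS]
    simp only [hG]
    rcases Nat.eq_zero_or_pos n with rfl | hn
    · rw [Finset.sum_eq_zero (fun a ha => by
        rw [Finset.mem_Icc] at ha
        rw [if_neg (by omega)])]
      simp
    · rw [if_neg (show ¬ n = 0 by omega), if_pos (show 1 ≤ n by omega)]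
      have hsum : (∑ a ∈ Finset.Icc 1 h,
            if a ≤ n then (if n - a = 0 then 0 else ((SS (n-a) h).ncard : ℤ)) else 0)
          = ∑ a ∈ Finset.Icc 1 (min h (n-1)), ((SS (n-a) h).ncard : ℤ) := by
        rw [show Finset.Icc 1 (min h (n-1)) =
            (Finset.Icc 1 h).filter (fun a => a ≤ n - 1) from by
          ext x; simp [Finset.mem_Icc, Finset.mem_filter]; omega]
        rw [Finset.sum_filter]
        apply Finset.sum_congr rfl
        intro a ha
        rw [Finset.mem_Icc] at ha
        by_cases h1 : a ≤ n - 1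
        · rw [if_pos h1, if_pos (by omega), if_neg (by omega)]
        · rw [if_neg h1]
          by_cases h2 : a ≤ n
          · rw [if_pos h2, show n - a = 0 from by omega, if_pos rfl]
          · rw [if_neg h2]
      rw [hsum]
      have hrec := card_rec (n := n) (h := h) hn hh
      have hrec' := congrArg (fun t : ℕ => (t : ℤ)) hrec
      push_cast at hrec'
      linarith [hrec']
  have step2 : (1 - X) * (1 - p) = 1 - 2 * X + X ^ (h+1) := by
    rw [mul_sub, mul_one, hp, geom h]
    ring
  calc ((1 : PowerSeries ℤ) - 2 * X + X ^ (h + 1)) * (heightGF h - 1)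
      = ((1 - X) * (1 - p)) * (heightGF h - 1) := by rw [step2]
    _ = (1 - X) * ((1 - p) * (heightGF h - 1)) := by ring
    _ = (1 - X) * (X * heightGF (h-1)) := by rw [step1]
    _ = X * (1 - X) * heightGF (h - 1) := by ring
end
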